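/- arXiv:1301.0854 — 5 statements merged into one kernel-verified Lean document; each statement's English description precedes it below -/
import Mathlib

section
/- If X is an ε-full nearest neighbor Z^d shift of finite type with ε < 1/(2d+2), then for any locally admissible configuration w with shape S whose inner boundary consists only of good letters (letters in G), and any site t ∈ Z^d \ S, there are more than |A|(1 - (2d+1)ε) good letters g such that the concatenation of w with g at site t is locally admissible. -/
open MeasureTheory

abbrev Site (d : ℕ) := Fin d → ℤ

def unitVec (d : ℕ) (i : Fin d) : Site d := fun j => if j = i then 1 else 0

def adjSites {d : ℕ} (u v : Site d) : Prop :=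
  ∃ i : Fin d, v = u + unitVec d i ∨ u = v + unitVec d i

def innerBd {d : ℕ} (S : Set (Site d)) : Set (Site d) :=
  {v | v ∈ S ∧ ∃ u, u ∉ S ∧ adjSites v u}

def outerBd {d : ℕ} (S : Set (Site d)) : Set (Site d) :=
  {v | v ∉ S ∧ ∃ u, u ∈ S ∧ adjSites v u}

def cube (d n : ℕ) : Set (Site d) := {v | ∀ i, 1 ≤ v i ∧ v i ≤ (n : ℤ)}

def symBox (d n : ℕ) : Set (Site d) := {v | ∀ i, |v i| ≤ (n : ℤ)}

def symBoxR (d : ℕ) (r : ℝ) : Set (Site d) := {v | ∀ i, |((v i : ℤ) : ℝ)| ≤ r}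

/-- A nearest neighbor `ℤ^d` SFT is specified by its allowed adjacent pairs
in each of the `d` cardinal directions: `adj i a b` means the pair `a b` may
appear at sites `v, v + e i`. -/
structure NNSFT (d : ℕ) (A : Type) where
  adj : Fin d → A → A → Prop

namespace NNSFT

variable {d : ℕ} {A : Type}

/-- The points of the subshift. -/
def pts (X : NNSFT d A) : Set (Site d → A) :=
  {x | ∀ (i : Fin d) (v : Site d), X.adj i (x v) (x (v + unitVec d i))}

/-- A configuration on shape `S` is locally admissible if it contains no
forbidden adjacent pair inside `S`. -/
def locAdm (X : NNSFT d A) (S : Set (Site d)) (w : Site d → A) : Prop :=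
  ∀ (i : Fin d) (v : Site d), v ∈ S → v + unitVec d i ∈ S →
    X.adj i (w v) (w (v + unitVec d i))

/-- A configuration on shape `S` is globally admissible if it extends to a
point of the subshift. -/
def globAdm (X : NNSFT d A) (S : Set (Site d)) (w : Site d → A) : Prop :=
  ∃ x ∈ X.pts, ∀ v ∈ S, x v = w v

/-- `X` is `ε`-full with good-letter set `G`. -/
def epsFullWith [Fintype A] (X : NNSFT d A) (ε : ℝ) (G : Set A) : Prop :=
  ((G.ncard : ℝ) > (1 - ε) * Fintype.card A) ∧
  ∀ g ∈ G, ∀ i : Fin d,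
    (({a : A | X.adj i g a}.ncard : ℝ) > (1 - ε) * Fintype.card A) ∧
    (({a : A | X.adj i a g}.ncard : ℝ) > (1 - ε) * Fintype.card A)

/-- `X` is `ε`-full. -/
def epsFull [Fintype A] (X : NNSFT d A) (ε : ℝ) : Prop :=
  ∃ G : Set A, X.epsFullWith ε G

/-- The globally admissible patterns on shape `S`. -/
def langSet (X : NNSFT d A) (S : Set (Site d)) : Set (S → A) :=
  (fun x => S.restrict x) '' X.pts

/-- The number of globally admissible patterns on shape `S`. -/
noncomputable def langCard (X : NNSFT d A) (S : Set (Site d)) : ℕ :=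
  (X.langSet S).ncard

/-- Topological entropy, as the infimum (= limit, by subadditivity) of the
normalized log-counts of globally admissible patterns on cubes. -/
noncomputable def entropy (X : NNSFT d A) : ℝ :=
  ⨅ n : ℕ+, Real.log (X.langCard (cube d (n : ℕ))) / ((n : ℕ) : ℝ) ^ d

end NNSFT

instance confMS (d : ℕ) (A : Type) : MeasurableSpace (Site d → A) :=
  @MeasurableSpace.pi (Site d) (fun _ => A) (fun _ => ⊤)

def shiftMap {d : ℕ} {A : Type} (t : Site d) (x : Site d → A) : Site d → A :=
  fun v => x (v + t)

/-- Shift invariance of a measure on the full shift. -/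
def shiftInv {d : ℕ} {A : Type} (μ : Measure (Site d → A)) : Prop :=
  ∀ t : Site d, Measure.map (shiftMap t) μ = μ

/-- The cylinder set of configurations agreeing with `w` on `S`. -/
def cylEvent {d : ℕ} {A : Type} (S : Set (Site d)) (w : Site d → A) :
    Set (Site d → A) := {x | ∀ v ∈ S, x v = w v}

/-- Shannon entropy of the marginal of `μ` on the cube `[1,n]^d`. -/
noncomputable def blockEnt {d : ℕ} {A : Type} [Fintype A]
    (μ : Measure (Site d → A)) (n : ℕ) : ℝ :=
  ∑ w : (Fin d → Fin n) → A,
    Real.negMulLog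
      ((μ {x | ∀ p : Fin d → Fin n, x (fun i => (p i : ℤ) + 1) = w p}).toReal)

/-- Measure-theoretic entropy, as the infimum (= limit, by subadditivity) of
normalized Shannon entropies of cube marginals. -/
noncomputable def measEnt {d : ℕ} {A : Type} [Fintype A]
    (μ : Measure (Site d → A)) : ℝ :=
  ⨅ n : ℕ+, blockEnt μ (n : ℕ) / ((n : ℕ) : ℝ) ^ d

/-- `μ` is a measure of maximal entropy for `X`. -/
def NNSFT.isMME {d : ℕ} {A : Type} [Fintype A] (X : NNSFT d A)
    (μ : Measure (Site d → A)) : Prop :=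
  IsProbabilityMeasure μ ∧ shiftInv μ ∧ μ X.pts = 1 ∧ measEnt μ = X.entropy

/-- `badConn bad S T x` : in the configuration `x` there is a path of
`bad`-letters from `S` to `T`. -/
def badConn {d : ℕ} {A : Type} (bad : A → Prop) (S T : Set (Site d))
    (x : Site d → A) : Prop :=
  ∃ (L : ℕ) (p : ℕ → Site d), p 0 ∈ S ∧ p L ∈ T ∧
    (∀ j < L, adjSites (p j) (p (j + 1))) ∧ ∀ j ≤ L, bad (x (p j))

theorem many_good_extensions {d : ℕ} {A : Type} [Fintype A] (X : NNSFT d A)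
    (ε : ℝ) (G : Set A) (hfull : X.epsFullWith ε G) (hε : ε < 1 / (2 * d + 2))
    (S : Set (Site d)) (hS : S.Finite) (w : Site d → A)
    (hw : X.locAdm S w) (hwG : ∀ v ∈ innerBd S, w v ∈ G)
    (t : Site d) (ht : t ∉ S) :
    ({g : A | g ∈ G ∧ X.locAdm (insert t S) (Function.update w t g)}.ncard : ℝ) >
      (1 - (2 * d + 1) * ε) * Fintype.card A := by
  classical
  obtain ⟨hG, hnb⟩ := hfull
  set N : ℝ := (Fintype.card A : ℝ) with hN
  have key : ∀ s : Set A, (1 - ε) * N < (s.ncard : ℝ) → ((sᶜ.ncard : ℝ) < ε * N) := by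
    intro s hs
    have h1 : s.ncard + sᶜ.ncard = Fintype.card A := by
      simpa [Nat.card_eq_fintype_card] using Set.ncard_add_ncard_compl s
    have h2 : (s.ncard : ℝ) + (sᶜ.ncard : ℝ) = N := by rw [hN]; exact_mod_cast congrArg (Nat.cast : ℕ → ℝ) h1
    have h3 : (s.ncard : ℝ) ≤ N := by linarith [show (0:ℝ) ≤ (sᶜ.ncard : ℝ) from Nat.cast_nonneg _]
    nlinarith
  have hGle : (G.ncard : ℝ) ≤ N := by
    have := Set.ncard_le_ncard (Set.subset_univ G) Set.finite_univ
    rw [Set.ncard_univ, Nat.card_eq_fintype_card] at this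
    rw [hN]
    exact_mod_cast this
  have hεN : 0 < ε * N := by nlinarith
  have hne : ∀ (v : Site d) (i : Fin d), v + unitVec d i ≠ v := by
    intro v i h
    have := congrFun h i
    simp [unitVec] at this
  have hmemP : ∀ i : Fin d, t + unitVec d i ∈ S → w (t + unitVec d i) ∈ G := by
    intro i h
    exact hwG _ ⟨h, t, ht, ⟨i, Or.inr rfl⟩⟩
  have hmemM : ∀ i : Fin d, t - unitVec d i ∈ S → w (t - unitVec d i) ∈ G := by
    intro i h
    exact hwG _ ⟨h, t, ht, ⟨i, Or.inl (by abel)⟩⟩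
  set Cp : Fin d → Set A := fun i => {a | t + unitVec d i ∈ S → X.adj i a (w (t + unitVec d i))} with hCpdef
  set Cm : Fin d → Set A := fun i => {a | t - unitVec d i ∈ S → X.adj i (w (t - unitVec d i)) a} with hCmdef
  set T : Set A := {g | g ∈ G ∧ X.locAdm (insert t S) (Function.update w t g)} with hTdef
  -- inclusion
  have hincl : G ∩ ⋂ i, (Cp i ∩ Cm i) ⊆ T := by
    rintro g ⟨hgG, hgC⟩
    simp only [Set.mem_iInter, Set.mem_inter_iff] at hgC
    refine ⟨hgG, ?_⟩
    intro i v hv hv2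
    rcases Set.mem_insert_iff.mp hv with hvt | hvS
    · subst hvt
      have h2 : v + unitVec d i ∈ S := by
        rcases Set.mem_insert_iff.mp hv2 with h | h
        · exact absurd h (hne v i)
        · exact h
      rw [Function.update_self, Function.update_of_ne (hne v i)]
      exact (hgC i).1 h2
    · have hvt : v ≠ t := fun h => ht (h ▸ hvS)
      rcases Set.mem_insert_iff.mp hv2 with h | h
      · have hveq : v = t - unitVec d i := by
          rw [← h]; abel
        rw [Function.update_of_ne hvt, h, Function.update_self, hveq]
        exact (hgC i).2 (hveq ▸ hvS)
      · have hvt2 : v + unitVec d i ≠ t := fun he => ht (he ▸ h)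
        rw [Function.update_of_ne hvt, Function.update_of_ne hvt2]
        exact hw i v hvS h
  -- complement bounds
  have hCp : ∀ i : Fin d, (((Cp i)ᶜ).ncard : ℝ) ≤ ε * N := by
    intro i
    by_cases h : t + unitVec d i ∈ S
    · have he : Cp i = {a | X.adj i a (w (t + unitVec d i))} := by
        ext a; simp [hCpdef, h]
      rw [he]
      exact le_of_lt (key _ ((hnb _ (hmemP i h) i).2))
    · have he : Cp i = Set.univ := by
        ext a; simp [hCpdef, h]
      rw [he, Set.compl_univ, Set.ncard_empty]
      simpa using le_of_lt hεN
  have hCm : ∀ i : Fin d, (((Cm i)ᶜ).ncard : ℝ) ≤ ε * N := by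
    intro i
    by_cases h : t - unitVec d i ∈ S
    · have he : Cm i = {a | X.adj i (w (t - unitVec d i)) a} := by
        ext a; simp [hCmdef, h]
      rw [he]
      exact le_of_lt (key _ ((hnb _ (hmemM i h) i).1))
    · have he : Cm i = Set.univ := by
        ext a; simp [hCmdef, h]
      rw [he, Set.compl_univ, Set.ncard_empty]
      simpa using le_of_lt hεN
  have hsubc : Tᶜ ⊆ Gᶜ ∪ ⋃ i, ((Cp i)ᶜ ∪ (Cm i)ᶜ) := by
    have := Set.compl_subset_compl.mpr hincl
    refine this.trans ?_
    rw [Set.compl_inter, Set.compl_iInter]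
    gcongr with i
    rw [Set.compl_inter]
  -- cardinality bound on the complement
  have hcard : (Tᶜ.ncard : ℝ) ≤ (Gᶜ.ncard : ℝ) + ∑ i : Fin d, (((Cp i)ᶜ.ncard : ℝ) + ((Cm i)ᶜ.ncard : ℝ)) := by
    have hfin : Tᶜ.toFinset ⊆ Gᶜ.toFinset ∪ Finset.univ.biUnion (fun i => (Cp i)ᶜ.toFinset ∪ (Cm i)ᶜ.toFinset) := by
      intro a ha
      rw [Set.mem_toFinset] at ha
      have := hsubc ha
      rcases this with h | h
      · exact Finset.mem_union_left _ (Set.mem_toFinset.mpr h)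
      · obtain ⟨_, ⟨i, rfl⟩, hi⟩ := h
        refine Finset.mem_union_right _ (Finset.mem_biUnion.mpr ⟨i, Finset.mem_univ i, ?_⟩)
        rcases hi with h | h
        · exact Finset.mem_union_left _ (Set.mem_toFinset.mpr h)
        · exact Finset.mem_union_right _ (Set.mem_toFinset.mpr h)
    have h1 : Tᶜ.ncard ≤ Gᶜ.ncard + ∑ i : Fin d, ((Cp i)ᶜ.ncard + (Cm i)ᶜ.ncard) := by
      calc Tᶜ.ncard = Tᶜ.toFinset.card := Set.ncard_eq_toFinset_card' _
        _ ≤ (Gᶜ.toFinset ∪ Finset.univ.biUnion (fun i => (Cp i)ᶜ.toFinset ∪ (Cm i)ᶜ.toFinset)).card :=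
            Finset.card_le_card hfin
        _ ≤ Gᶜ.toFinset.card + (Finset.univ.biUnion (fun i => (Cp i)ᶜ.toFinset ∪ (Cm i)ᶜ.toFinset)).card :=
            Finset.card_union_le _ _
        _ ≤ Gᶜ.toFinset.card + ∑ i : Fin d, ((Cp i)ᶜ.toFinset ∪ (Cm i)ᶜ.toFinset).card := by
            gcongr
            exact Finset.card_biUnion_le
        _ ≤ Gᶜ.toFinset.card + ∑ i : Fin d, ((Cp i)ᶜ.toFinset.card + (Cm i)ᶜ.toFinset.card) := by
            gcongr with i
            exact Finset.card_union_le _ _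
        _ = Gᶜ.ncard + ∑ i : Fin d, ((Cp i)ᶜ.ncard + (Cm i)ᶜ.ncard) := by
            simp [Set.ncard_eq_toFinset_card']
    calc (Tᶜ.ncard : ℝ) ≤ ((Gᶜ.ncard + ∑ i : Fin d, ((Cp i)ᶜ.ncard + (Cm i)ᶜ.ncard) : ℕ) : ℝ) := by
          exact_mod_cast h1
      _ = (Gᶜ.ncard : ℝ) + ∑ i : Fin d, (((Cp i)ᶜ.ncard : ℝ) + ((Cm i)ᶜ.ncard : ℝ)) := by
          push_cast; ring
  have hGc : (Gᶜ.ncard : ℝ) < ε * N := key G hG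
  have hsum : ∑ i : Fin d, (((Cp i)ᶜ.ncard : ℝ) + ((Cm i)ᶜ.ncard : ℝ)) ≤ (d : ℝ) * (2 * ε * N) := by
    calc ∑ i : Fin d, (((Cp i)ᶜ.ncard : ℝ) + ((Cm i)ᶜ.ncard : ℝ))
        ≤ ∑ _i : Fin d, (2 * ε * N) := by
          apply Finset.sum_le_sum
          intro i _
          have := hCp i; have := hCm i; linarith
      _ = (d : ℝ) * (2 * ε * N) := by rw [Finset.sum_const, Finset.card_univ, Fintype.card_fin, nsmul_eq_mul]
  have hTc : (T.ncard : ℝ) + (Tᶜ.ncard : ℝ) = N := by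
    have := Set.ncard_add_ncard_compl T
    rw [Nat.card_eq_fintype_card] at this
    rw [hN]
    exact_mod_cast congrArg (Nat.cast : ℕ → ℝ) this
  have hfinal : (Tᶜ.ncard : ℝ) < (2 * (d : ℝ) + 1) * ε * N := by nlinarith
  have : (T.ncard : ℝ) > N - (2 * (d : ℝ) + 1) * ε * N := by linarith
  calc (1 - (2 * (d : ℝ) + 1) * ε) * N = N - (2 * (d : ℝ) + 1) * ε * N := by ring
    _ < (T.ncard : ℝ) := this
end

section
/- If X is an ε-full nearest neighbor Z^d shift of finite type with ε < 1/(2d+2), then every locally admissible configuration w whose inner boundary consists only of good letters is globally admissible; moreover w extends to a point of X by appending only good letters. -/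
open MeasureTheory

section GoodExtension

open Classical

variable {d : ℕ} {A : Type}

/-- Pick an element of a set, or a default. -/
noncomputable def pickSet [Nonempty A] (C : Set A) : A :=
  if h : C.Nonempty then h.choose else Classical.arbitrary A

lemma pickSet_mem [Nonempty A] {C : Set A} (h : C.Nonempty) : pickSet C ∈ C := by
  rw [pickSet, dif_pos h]; exact h.choose_spec

/-- The set of candidate letters at site `v`, given the "already determined"
predicate `P` and current values `g`. -/
def cand (X : NNSFT d A) (G : Set A) (P : Site d → Prop) (g : Site d → A)
    (v : Site d) : Set A :=
  {a | a ∈ G ∧ ∀ i : Fin d,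
    (P (v + unitVec d i) → X.adj i a (g (v + unitVec d i))) ∧
    (P (v - unitVec d i) → X.adj i (g (v - unitVec d i)) a)}

/-- Greedy extension along the enumeration `enc`. -/
noncomputable def nnExt [Nonempty A] (X : NNSFT d A) (S : Set (Site d))
    (w : Site d → A) (G : Set A) (enc : Site d → ℕ) : Site d → A := fun v =>
  if v ∈ S then w v
  else
    pickSet (cand X G (fun u => u ∈ S ∨ enc u < enc v)
      (fun u => if u ∈ S then w u
        else if h : enc u < enc v then nnExt X S w G enc u
        else Classical.arbitrary A) v)
termination_by v => enc v
decreasing_by exact h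

/-- The value function seen at step `N`. -/
noncomputable def gfun [Nonempty A] (X : NNSFT d A) (S : Set (Site d))
    (w : Site d → A) (G : Set A) (enc : Site d → ℕ) (N : ℕ) : Site d → A :=
  fun u => if u ∈ S then w u
    else if enc u < N then nnExt X S w G enc u else Classical.arbitrary A

lemma nnExt_of_mem [Nonempty A] (X : NNSFT d A) (S : Set (Site d))
    (w : Site d → A) (G : Set A) (enc : Site d → ℕ) {v : Site d} (hv : v ∈ S) :
    nnExt X S w G enc v = w v := by
  rw [nnExt, if_pos hv]

lemma nnExt_of_notMem [Nonempty A] (X : NNSFT d A) (S : Set (Site d))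
    (w : Site d → A) (G : Set A) (enc : Site d → ℕ) {v : Site d} (hv : v ∉ S) :
    nnExt X S w G enc v =
      pickSet (cand X G (fun u => u ∈ S ∨ enc u < enc v)
        (gfun X S w G enc (enc v)) v) := by
  rw [nnExt, if_neg hv]
  congr 1

/-- The counting lemma: finitely many large subsets of a finite set intersect. -/
lemma exists_mem_all {ι : Type} [Fintype A] [Fintype ι] {ε : ℝ}
    (T : ι → Finset A)
    (hT : ∀ j, ((T j).card : ℝ) > (1 - ε) * Fintype.card A)
    (hk : (Fintype.card ι : ℝ) * ε < 1) (hA : 0 < Fintype.card A) :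
    ∃ a : A, ∀ j, a ∈ T j := by
  by_contra h
  push_neg at h
  have hcov : (Finset.univ : Finset A) ⊆ Finset.univ.biUnion (fun j => (T j)ᶜ) := by
    intro a _
    obtain ⟨j, hj⟩ := h a
    exact Finset.mem_biUnion.2 ⟨j, Finset.mem_univ _, Finset.mem_compl.2 hj⟩
  have hle : (Fintype.card A : ℝ) ≤ ∑ j : ι, (((T j)ᶜ.card : ℝ)) := by
    have h1 : (Finset.univ : Finset A).card ≤ ∑ j : ι, ((T j)ᶜ).card :=
      le_trans (Finset.card_le_card hcov) Finset.card_biUnion_le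
    calc (Fintype.card A : ℝ) = ((Finset.univ : Finset A).card : ℝ) := by
          simp [Finset.card_univ]
      _ ≤ ((∑ j : ι, ((T j)ᶜ).card : ℕ) : ℝ) := by exact_mod_cast h1
      _ = ∑ j : ι, (((T j)ᶜ.card : ℝ)) := by push_cast; ring
  have hcompl : ∀ j, (((T j)ᶜ.card : ℝ)) < ε * Fintype.card A := by
    intro j
    have hcc : ((T j)ᶜ).card = Fintype.card A - (T j).card := Finset.card_compl _
    have hTle : (T j).card ≤ Fintype.card A := (T j).card_le_univ.trans_eq (by simp)
    have : (((T j)ᶜ).card : ℝ) = (Fintype.card A : ℝ) - (T j).card := by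
      rw [hcc]; push_cast [hTle]; ring
    rw [this]
    have := hT j
    nlinarith
  rcases isEmpty_or_nonempty ι with hι | hι
  · have : (∑ j : ι, (((T j)ᶜ.card : ℝ))) = 0 := by simp
    rw [this] at hle
    exact absurd hle (by exact_mod_cast (Nat.cast_pos.2 hA).not_ge)
  · have hsum : (∑ j : ι, (((T j)ᶜ.card : ℝ))) < ∑ _j : ι, ε * Fintype.card A :=
      Finset.sum_lt_sum_of_nonempty (Finset.univ_nonempty) (fun j _ => hcompl j)
    have : (∑ _j : ι, ε * (Fintype.card A : ℝ)) =
        (Fintype.card ι : ℝ) * ε * Fintype.card A := by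
      rw [Finset.sum_const, Finset.card_univ]; push_cast; ring
    rw [this] at hsum
    have hfin : (Fintype.card ι : ℝ) * ε * Fintype.card A < Fintype.card A := by
      have hA' : (0:ℝ) < Fintype.card A := by exact_mod_cast hA
      nlinarith
    linarith

end GoodExtension


section GoodExtension2

open Classical

variable {d : ℕ} {A : Type}

lemma cand_nonempty [Fintype A] {X : NNSFT d A} {ε : ℝ} {G : Set A}
    (hfull : X.epsFullWith ε G) (hε : ε < 1 / (2 * d + 2))
    (P : Site d → Prop) (g : Site d → A) (v : Site d)
    (hg1 : ∀ i : Fin d, P (v + unitVec d i) → g (v + unitVec d i) ∈ G)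
    (hg2 : ∀ i : Fin d, P (v - unitVec d i) → g (v - unitVec d i) ∈ G) :
    (cand X G P g v).Nonempty := by
  have hd2 : (0:ℝ) < 2 * d + 2 := by positivity
  have hε1 : ε < 1 := lt_of_lt_of_le hε (by
    rw [div_le_one hd2]; push_cast; linarith [Nat.cast_nonneg (α := ℝ) d])
  have hGpos : (0:ℝ) < G.ncard := lt_of_le_of_lt
    (mul_nonneg (by linarith) (Nat.cast_nonneg _) : (0:ℝ) ≤ (1 - ε) * Fintype.card A) hfull.1
  have hGne : G.Nonempty := Set.nonempty_of_ncard_ne_zero (by exact_mod_cast hGpos.ne')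
  haveI : Nonempty A := ⟨hGne.choose⟩
  have hA : 0 < Fintype.card A := Fintype.card_pos
  have hA' : (0:ℝ) < Fintype.card A := by exact_mod_cast hA
  have hGle : (G.ncard : ℝ) ≤ Fintype.card A := by
    have := Set.ncard_le_ncard (Set.subset_univ G) Set.finite_univ
    rw [Set.ncard_univ, Nat.card_eq_fintype_card] at this
    exact_mod_cast this
  have hεpos : 0 < ε := by nlinarith [hfull.1]
  have hεd : ε * (2 * d + 2) < 1 := by
    rw [lt_div_iff₀ hd2] at hε; exact hε
  -- index type: `none` for G, `inl i` / `inr i` for the two neighbors in direction i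
  set T : Option (Fin d ⊕ Fin d) → Finset A := fun j =>
    j.elim G.toFinset (Sum.elim
      (fun i => if P (v + unitVec d i)
        then {a : A | X.adj i a (g (v + unitVec d i))}.toFinset else Finset.univ)
      (fun i => if P (v - unitVec d i)
        then {a : A | X.adj i (g (v - unitVec d i)) a}.toFinset else Finset.univ)) with hT
  have hTcard : ∀ j, ((T j).card : ℝ) > (1 - ε) * Fintype.card A := by
    rintro (_ | (i | i))
    · simp only [hT, Option.elim]
      rw [← Set.ncard_eq_toFinset_card']
      exact hfull.1
    · simp only [hT, Option.elim, Sum.elim_inl]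
      by_cases hp : P (v + unitVec d i)
      · rw [if_pos hp, ← Set.ncard_eq_toFinset_card']
        exact (hfull.2 _ (hg1 i hp) i).2
      · rw [if_neg hp]
        simpa [Finset.card_univ] using (by nlinarith : (1 - ε) * (Fintype.card A : ℝ) < Fintype.card A)
    · simp only [hT, Option.elim, Sum.elim_inr]
      by_cases hp : P (v - unitVec d i)
      · rw [if_pos hp, ← Set.ncard_eq_toFinset_card']
        exact (hfull.2 _ (hg2 i hp) i).1
      · rw [if_neg hp]
        simpa [Finset.card_univ] using (by nlinarith : (1 - ε) * (Fintype.card A : ℝ) < Fintype.card A)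
  have hkcard : (Fintype.card (Option (Fin d ⊕ Fin d)) : ℝ) * ε < 1 := by
    have : Fintype.card (Option (Fin d ⊕ Fin d)) = d + d + 1 := by simp
    rw [this]; push_cast; nlinarith
  obtain ⟨a, ha⟩ := exists_mem_all T hTcard hkcard hA
  refine ⟨a, ?_, fun i => ⟨?_, ?_⟩⟩
  · have := ha none
    simpa [hT, Set.mem_toFinset] using this
  · intro hp
    have := ha (some (Sum.inl i))
    simp only [hT, Option.elim, Sum.elim_inl, if_pos hp, Set.mem_toFinset] at this
    exact this
  · intro hp
    have := ha (some (Sum.inr i))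
    simp only [hT, Option.elim, Sum.elim_inr, if_pos hp, Set.mem_toFinset] at this
    exact this

lemma nnExt_spec [Fintype A] [Nonempty A] {X : NNSFT d A} {ε : ℝ} {G : Set A}
    (hfull : X.epsFullWith ε G) (hε : ε < 1 / (2 * d + 2))
    {S : Set (Site d)} (w : Site d → A) (hwG : ∀ v ∈ innerBd S, w v ∈ G)
    (enc : Site d → ℕ) :
    ∀ v ∉ S, nnExt X S w G enc v ∈
      cand X G (fun u => u ∈ S ∨ enc u < enc v) (gfun X S w G enc (enc v)) v := by
  have key : ∀ n : ℕ, ∀ v ∉ S, enc v < n → nnExt X S w G enc v ∈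
      cand X G (fun u => u ∈ S ∨ enc u < enc v) (gfun X S w G enc (enc v)) v := by
    intro n
    induction n using Nat.strong_induction_on with
    | _ n IH =>
      intro v hvS hvn
      rw [nnExt_of_notMem X S w G enc hvS]
      apply pickSet_mem
      apply cand_nonempty hfull hε
      · intro i hP
        by_cases huS : v + unitVec d i ∈ S
        · simp only [gfun, if_pos huS]
          exact hwG _ ⟨huS, v, hvS, i, Or.inr rfl⟩
        · have hlt : enc (v + unitVec d i) < enc v := hP.resolve_left huS
          simp only [gfun, if_neg huS, if_pos hlt]
          exact (IH (enc v) hvn _ huS hlt).1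
      · intro i hP
        by_cases huS : v - unitVec d i ∈ S
        · simp only [gfun, if_pos huS]
          refine hwG _ ⟨huS, v, hvS, i, Or.inl ?_⟩
          rw [sub_add_cancel]
        · have hlt : enc (v - unitVec d i) < enc v := hP.resolve_left huS
          simp only [gfun, if_neg huS, if_pos hlt]
          exact (IH (enc v) hvn _ huS hlt).1
  exact fun v hv => key (enc v + 1) v hv (Nat.lt_succ_self _)

end GoodExtension2

theorem good_boundary_globally_admissible {d : ℕ} {A : Type} [Fintype A]
    (X : NNSFT d A) (ε : ℝ) (G : Set A) (hfull : X.epsFullWith ε G)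
    (hε : ε < 1 / (2 * d + 2)) (S : Set (Site d)) (hS : S.Finite)
    (w : Site d → A) (hw : X.locAdm S w) (hwG : ∀ v ∈ innerBd S, w v ∈ G) :
    X.globAdm S w ∧
      ∃ x ∈ X.pts, (∀ v ∈ S, x v = w v) ∧ ∀ v ∉ S, x v ∈ G := by
  classical
  -- basic facts
  have hd2 : (0:ℝ) < 2 * d + 2 := by positivity
  have hε1 : ε < 1 := lt_of_lt_of_le hε (by
    rw [div_le_one hd2]; push_cast; linarith [Nat.cast_nonneg (α := ℝ) d])
  have hGpos : (0:ℝ) < G.ncard := lt_of_le_of_lt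
    (mul_nonneg (by linarith) (Nat.cast_nonneg _) : (0:ℝ) ≤ (1 - ε) * Fintype.card A) hfull.1
  have hGne : G.Nonempty := Set.nonempty_of_ncard_ne_zero (by exact_mod_cast hGpos.ne')
  haveI : Nonempty A := ⟨hGne.choose⟩
  obtain ⟨enc, hinj⟩ := Countable.exists_injective_nat (Site d)
  set x : Site d → A := nnExt X S w G enc with hx
  have spec := nnExt_spec hfull hε w hwG enc
  have hxS : ∀ v ∈ S, x v = w v := fun v hv => nnExt_of_mem X S w G enc hv
  have hxG : ∀ v ∉ S, x v ∈ G := fun v hv => (spec v hv).1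
  have hpts : x ∈ X.pts := by
    intro i v
    by_cases hv : v ∈ S <;> by_cases hu : v + unitVec d i ∈ S
    · rw [hx, nnExt_of_mem X S w G enc hv, nnExt_of_mem X S w G enc hu]
      exact hw i v hv hu
    · have h := ((spec _ hu).2 i).2
      rw [add_sub_cancel_right] at h
      have h2 := h (Or.inl hv)
      rw [hx, nnExt_of_mem X S w G enc hv]
      simpa [gfun, hv] using h2
    · have h := ((spec v hv).2 i).1 (Or.inl hu)
      rw [hx, nnExt_of_mem X S w G enc hu]
      simpa [gfun, hu] using h
    · have hne : v ≠ v + unitVec d i := by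
        intro hEq
        have := congrFun hEq i
        simp [unitVec] at this
      have hne' : enc v ≠ enc (v + unitVec d i) := fun h => hne (hinj h)
      rcases lt_or_gt_of_ne hne' with hlt | hlt
      · have h := ((spec _ hu).2 i).2
        rw [add_sub_cancel_right] at h
        have h2 := h (Or.inr hlt)
        simpa [gfun, hv, hlt] using h2
      · have h := ((spec v hv).2 i).1 (Or.inr hlt)
        simpa [gfun, hu, hlt] using h
  exact ⟨⟨x, hpts, hxS⟩, x, hpts, hxS, hxG⟩
end

section
/- If a nearest neighbor Z^d shift of finite type X with alphabet A is not ε-full, then its topological entropy satisfies h(X) < log|A| - (1/2)·log(2d/(2d - ε²)); in particular h(X) < log|A| - ε²/(4d). -/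
open MeasureTheory

section MyAux

attribute [local instance] Classical.propDecidable

variable {d : ℕ} {A : Type} [Fintype A]

lemma myCube_finite (d n : ℕ) : (cube d n).Finite := by
  have hsub : cube d n ⊆ Set.pi Set.univ (fun _ : Fin d => Set.Icc (1:ℤ) n) := by
    intro v hv i _
    exact Set.mem_Icc.2 (hv i)
  exact (Set.Finite.pi (fun _ => Set.finite_Icc _ _)).subset hsub

lemma myLangSet_nonempty (X : NNSFT d A) (hX : X.pts.Nonempty) (S : Set (Site d)) :
    (X.langSet S).Nonempty := by
  obtain ⟨x, hx⟩ := hX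
  exact ⟨S.restrict x, x, hx, rfl⟩

lemma myLangCard_pos (X : NNSFT d A) (hX : X.pts.Nonempty) (n : ℕ) :
    0 < X.langCard (cube d n) := by
  haveI : Finite ↥(cube d n) := (myCube_finite d n).to_subtype
  rw [NNSFT.langCard, Set.ncard_pos (Set.toFinite _)]
  exact myLangSet_nonempty X hX _

lemma myEntropy_le (X : NNSFT d A) (hX : X.pts.Nonempty) (n : ℕ+) :
    X.entropy ≤ Real.log (X.langCard (cube d (n : ℕ))) / ((n : ℕ) : ℝ) ^ d := by
  apply ciInf_le
  refine ⟨0, ?_⟩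
  rintro y ⟨m, rfl⟩
  have h1 : 1 ≤ X.langCard (cube d (m : ℕ)) := myLangCard_pos X hX _
  have h2 : (0:ℝ) ≤ Real.log (X.langCard (cube d (m : ℕ))) :=
    Real.log_nonneg (by exact_mod_cast h1)
  positivity

/-- The key counting injection: patterns on the side-2 cube are determined by
the allowed pairs on the `2^(d-1)` dominoes in direction `i0`. -/
lemma myKey_count (X : NNSFT d A) (hd : 0 < d) (i0 : Fin d)
    (hP : 1 ≤ ({p : A × A | X.adj i0 p.1 p.2}).ncard) :
    X.langCard (cube d 2) ≤ ({p : A × A | X.adj i0 p.1 p.2}).ncard ^ 2 ^ (d - 1) := by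
  set Pset : Set (A × A) := {p : A × A | X.adj i0 p.1 p.2} with hPset
  set H : Set (Site d) := {v | v ∈ cube d 2 ∧ v i0 = 1} with hH
  have hHfin : H.Finite := (myCube_finite d 2).subset (fun v hv => hv.1)
  haveI : Finite ↥H := hHfin.to_subtype
  have hHe : ∀ v ∈ H, v + unitVec d i0 ∈ cube d 2 := by
    intro v hv j
    have h1 := hv.1 j
    have h2 := hv.2
    by_cases hj : j = i0
    · subst hj
      simp only [Pi.add_apply, unitVec, eq_self_iff_true, if_true, h2]
      omega
    · simp only [Pi.add_apply, unitVec, if_neg hj, add_zero]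
      exact h1
  set f : (↥(cube d 2) → A) → (↥H → A × A) :=
    fun w u => (w ⟨u.1, u.2.1⟩, w ⟨u.1 + unitVec d i0, hHe u.1 u.2⟩) with hf
  set T : Set (↥H → A × A) := {g | ∀ u, X.adj i0 (g u).1 (g u).2} with hT
  have hmap : ∀ w ∈ X.langSet (cube d 2), f w ∈ T := by
    rintro w ⟨x, hx, rfl⟩
    intro u
    exact hx i0 u.1
  have hinj : Set.InjOn f (X.langSet (cube d 2)) := by
    intro w1 _ w2 _ hw
    funext v
    obtain ⟨v, hv⟩ := v
    have hb := hv i0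
    have : v i0 = 1 ∨ v i0 = 2 := by omega
    rcases this with h | h
    · have hvH : v ∈ H := ⟨hv, h⟩
      exact congrArg Prod.fst (congrFun hw ⟨v, hvH⟩)
    · set u : Site d := v - unitVec d i0 with hu
      have huH : u ∈ H := by
        constructor
        · intro j
          have h1 := hv j
          by_cases hj : j = i0
          · subst hj
            simp only [hu, Pi.sub_apply, unitVec, eq_self_iff_true, if_true, h]
            omega
          · simp only [hu, Pi.sub_apply, unitVec, if_neg hj, sub_zero]
            exact h1
        · simp only [hu, Pi.sub_apply, unitVec, eq_self_iff_true, if_true, h]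
          omega
      have hue : u + unitVec d i0 = v := by
        funext j
        simp [hu]
      have hcast : (⟨u + unitVec d i0, hHe u huH⟩ : ↥(cube d 2)) = ⟨v, hv⟩ :=
        Subtype.ext hue
      rw [← hcast]
      exact congrArg Prod.snd (congrFun hw ⟨u, huH⟩)
  have hle : X.langCard (cube d 2) ≤ T.ncard :=
    Set.ncard_le_ncard_of_injOn f hmap hinj (Set.toFinite T)
  have hTcard : T.ncard = Pset.ncard ^ Nat.card ↥H := by
    have e : ↥T ≃ (↥H → ↥Pset) :=
      { toFun := fun g u => ⟨g.1 u, g.2 u⟩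
        invFun := fun F => ⟨fun u => (F u).1, fun u => (F u).2⟩
        left_inv := fun g => rfl
        right_inv := fun F => rfl }
    rw [← Nat.card_coe_set_eq, Nat.card_congr e, Nat.card_fun,
      Nat.card_coe_set_eq]
  have hcardH : Nat.card ↥H ≤ 2 ^ (d - 1) := by
    haveI : Fintype ↥H := Fintype.ofFinite _
    rw [Nat.card_eq_fintype_card]
    have hinjφ : Function.Injective
        (fun (v : ↥H) (j : {j : Fin d // ¬ j = i0}) =>
          if v.1 j.1 = 1 then (0 : Fin 2) else 1) := by
      intro v w hvw
      apply Subtype.ext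
      funext j
      by_cases hj : j = i0
      · subst hj
        rw [v.2.2, w.2.2]
      · have hc := congrFun hvw ⟨j, hj⟩
        simp only at hc
        have hv := v.2.1 j
        have hw := w.2.1 j
        split_ifs at hc with h1 h2 h2
        · omega
        · exact absurd hc (by decide)
        · exact absurd hc (by decide)
        · omega
    calc Fintype.card ↥H ≤ Fintype.card ({j : Fin d // ¬ j = i0} → Fin 2) :=
          Fintype.card_le_of_injective _ hinjφ
      _ = 2 ^ (d - 1) := by
          rw [Fintype.card_fun, Fintype.card_fin]
          congr 1
          rw [Fintype.card_subtype_compl, Fintype.card_subtype_eq, Fintype.card_fin]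
  calc X.langCard (cube d 2) ≤ T.ncard := hle
    _ = Pset.ncard ^ Nat.card ↥H := hTcard
    _ ≤ Pset.ncard ^ 2 ^ (d - 1) := Nat.pow_le_pow_right hP hcardH

end MyAux

set_option maxHeartbeats 1000000 in
theorem not_epsFull_entropy_lt {d : ℕ} {A : Type} [Fintype A] (X : NNSFT d A)
    (hd : 0 < d) (hX : X.pts.Nonempty) (ε : ℝ) (hε : 0 < ε) (hε1 : ε ≤ 1)
    (hnot : ¬ X.epsFull ε) :
    X.entropy <
        Real.log (Fintype.card A) -
          (1 / 2) * Real.log ((2 * d) / (2 * d - ε ^ 2)) ∧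
    X.entropy < Real.log (Fintype.card A) - ε ^ 2 / (4 * d) := by
  classical
  obtain ⟨x0, hx0⟩ := hX
  have hXne : X.pts.Nonempty := ⟨x0, hx0⟩
  set N := Fintype.card A with hNdef
  haveI : Nonempty A := ⟨x0 0⟩
  have hN1 : 1 ≤ N := Fintype.card_pos
  have hNpos : (0:ℝ) < N := by exact_mod_cast hN1
  have hd1 : (1:ℝ) ≤ d := by exact_mod_cast hd
  -- basic finsets
  set row : Fin d → A → Finset A := fun i a => Finset.univ.filter (fun b => X.adj i a b)
    with hrow
  set col : Fin d → A → Finset A := fun i a => Finset.univ.filter (fun b => X.adj i b a)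
    with hcol
  have hrowS : ∀ (i : Fin d) (a : A), ({b | X.adj i a b} : Set A).ncard = (row i a).card := by
    intro i a
    rw [show {b | X.adj i a b} = ↑(row i a) by ext b; simp [hrow], Set.ncard_coe_finset]
  have hcolS : ∀ (i : Fin d) (a : A), ({b | X.adj i b a} : Set A).ncard = (col i a).card := by
    intro i a
    rw [show {b | X.adj i b a} = ↑(col i a) by ext b; simp [hcol], Set.ncard_coe_finset]
  set Bp : Fin d → Finset A := fun i =>
    Finset.univ.filter (fun a => ((row i a).card : ℝ) ≤ (1 - ε) * N) with hBp
  set Bm : Fin d → Finset A := fun i =>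
    Finset.univ.filter (fun a => ((col i a).card : ℝ) ≤ (1 - ε) * N) with hBm
  set Good : Finset A := Finset.univ.filter
    (fun a => ∀ i : Fin d, (1 - ε) * N < ((row i a).card : ℝ) ∧
      (1 - ε) * N < ((col i a).card : ℝ)) with hGoodDef
  -- the good set is small
  have hGood : (Good.card : ℝ) ≤ (1 - ε) * N := by
    by_contra hc
    push_neg at hc
    apply hnot
    refine ⟨↑Good, ?_, ?_⟩
    · rwa [Set.ncard_coe_finset]
    · intro g hg i
      rw [Finset.mem_coe, hGoodDef, Finset.mem_filter] at hg
      constructor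
      · rw [hrowS]; exact (hg.2 i).1
      · rw [hcolS]; exact (hg.2 i).2
  -- bad letters are numerous
  have hBad : ε * N ≤ ((Goodᶜ : Finset A).card : ℝ) := by
    have h1 : Goodᶜ.card = N - Good.card := by
      rw [Finset.card_compl]
    have h2 : Good.card ≤ N := Finset.card_le_univ _
    have h3 : ((Goodᶜ : Finset A).card : ℝ) = (N : ℝ) - Good.card := by
      rw [h1, Nat.cast_sub h2]
    rw [h3]
    linarith
  have hsubBad : Goodᶜ ⊆ Finset.univ.biUnion (fun i => Bp i ∪ Bm i) := by
    intro a ha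
    rw [Finset.mem_compl, hGoodDef, Finset.mem_filter] at ha
    push_neg at ha
    obtain ⟨i, hi⟩ := ha (Finset.mem_univ a)
    rw [Finset.mem_biUnion]
    refine ⟨i, Finset.mem_univ _, ?_⟩
    rw [Finset.mem_union, hBp, hBm, Finset.mem_filter, Finset.mem_filter]
    by_cases hcase : (1 - ε) * (N:ℝ) < ((row i a).card : ℝ)
    · exact Or.inr ⟨Finset.mem_univ _, hi hcase⟩
    · exact Or.inl ⟨Finset.mem_univ _, not_lt.1 hcase⟩
  have hsum : (Goodᶜ : Finset A).card ≤ ∑ i : Fin d, ((Bp i).card + (Bm i).card) :=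
    le_trans (Finset.card_le_card hsubBad)
      (le_trans Finset.card_biUnion_le
        (Finset.sum_le_sum fun i _ => Finset.card_union_le _ _))
  -- pick the best direction
  obtain ⟨i0, -, hi0⟩ := Finset.exists_max_image Finset.univ
    (fun i => (Bp i).card + (Bm i).card) ⟨⟨0, hd⟩, Finset.mem_univ _⟩
  have hsum2 : ∑ i : Fin d, ((Bp i).card + (Bm i).card) ≤
      d * ((Bp i0).card + (Bm i0).card) := by
    calc ∑ i : Fin d, ((Bp i).card + (Bm i).card)
        ≤ ∑ _i : Fin d, ((Bp i0).card + (Bm i0).card) :=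
          Finset.sum_le_sum (fun i _ => hi0 i (Finset.mem_univ i))
      _ = d * ((Bp i0).card + (Bm i0).card) := by
          rw [Finset.sum_const, Finset.card_univ, Fintype.card_fin, smul_eq_mul]
  have hkey0 : ε * N ≤ (d : ℝ) * (((Bp i0).card : ℝ) + ((Bm i0).card : ℝ)) := by
    have h1 : ((Goodᶜ : Finset A).card : ℝ) ≤
        (d : ℝ) * (((Bp i0).card : ℝ) + ((Bm i0).card : ℝ)) := by
      have := le_trans hsum hsum2
      exact_mod_cast this
    linarith
  -- pair counting in direction i0
  set P : ℕ := ∑ a : A, (row i0 a).card with hPdef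
  have hfilterP : (Finset.univ.filter (fun p : A × A => X.adj i0 p.1 p.2)).card = P := by
    rw [Finset.card_filter, ← Finset.univ_product_univ, Finset.sum_product, hPdef]
    refine Finset.sum_congr rfl fun a _ => ?_
    rw [hrow]
    rw [Finset.card_filter]
  set Qf : Finset (A × A) := Finset.univ.filter (fun p => ¬ X.adj i0 p.1 p.2) with hQf
  have hPQ : P + Qf.card = N * N := by
    rw [← hfilterP, hQf, Finset.card_filter_add_card_filter_not,
      Finset.card_univ, Fintype.card_prod]
  set Qp : Finset (A × A) := (Bp i0).biUnion (fun a => {a} ×ˢ (row i0 a)ᶜ) with hQp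
  set Qm : Finset (A × A) := (Bm i0).biUnion (fun b => (col i0 b)ᶜ ×ˢ {b}) with hQm
  have hQpcard : ((Bp i0).card : ℝ) * (ε * N) ≤ (Qp.card : ℝ) := by
    have hdisj : ∀ a ∈ (Bp i0 : Finset A), ∀ b ∈ (Bp i0 : Finset A), a ≠ b →
        Disjoint ({a} ×ˢ (row i0 a)ᶜ) ({b} ×ˢ (row i0 b)ᶜ) := by
      intro a _ b _ hab
      rw [Finset.disjoint_left]
      rintro ⟨x, y⟩ hx hy
      rw [Finset.mem_product, Finset.mem_singleton] at hx hy
      exact hab (hx.1 ▸ hy.1 ▸ rfl)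
    rw [hQp, Finset.card_biUnion hdisj, Nat.cast_sum]
    calc ((Bp i0).card : ℝ) * (ε * N) = ∑ _a ∈ Bp i0, ε * N := by
          rw [Finset.sum_const, nsmul_eq_mul]
      _ ≤ ∑ a ∈ Bp i0, (({a} ×ˢ (row i0 a)ᶜ).card : ℝ) := by
          refine Finset.sum_le_sum fun a ha => ?_
          rw [Finset.card_product, Finset.card_singleton, one_mul, Finset.card_compl,
            Nat.cast_sub (Finset.card_le_univ _)]
          have h2 : ((row i0 a).card : ℝ) ≤ (1 - ε) * N := by
            rw [hBp, Finset.mem_filter] at ha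
            exact ha.2
          linarith
  have hQmcard : ((Bm i0).card : ℝ) * (ε * N) ≤ (Qm.card : ℝ) := by
    have hdisj : ∀ a ∈ (Bm i0 : Finset A), ∀ b ∈ (Bm i0 : Finset A), a ≠ b →
        Disjoint ((col i0 a)ᶜ ×ˢ {a}) ((col i0 b)ᶜ ×ˢ {b}) := by
      intro a _ b _ hab
      rw [Finset.disjoint_left]
      rintro ⟨x, y⟩ hx hy
      rw [Finset.mem_product, Finset.mem_singleton] at hx hy
      exact hab (hx.2 ▸ hy.2 ▸ rfl)
    rw [hQm, Finset.card_biUnion hdisj, Nat.cast_sum]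
    calc ((Bm i0).card : ℝ) * (ε * N) = ∑ _a ∈ Bm i0, ε * N := by
          rw [Finset.sum_const, nsmul_eq_mul]
      _ ≤ ∑ a ∈ Bm i0, ((((col i0 a)ᶜ ×ˢ {a}).card : ℝ)) := by
          refine Finset.sum_le_sum fun a ha => ?_
          rw [Finset.card_product, Finset.card_singleton, mul_one, Finset.card_compl,
            Nat.cast_sub (Finset.card_le_univ _)]
          have h2 : ((col i0 a).card : ℝ) ≤ (1 - ε) * N := by
            rw [hBm, Finset.mem_filter] at ha
            exact ha.2
          linarith
  have hQpQf : Qp ⊆ Qf := by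
    intro p hp
    rw [hQp, Finset.mem_biUnion] at hp
    obtain ⟨a, _, hpa⟩ := hp
    rw [Finset.mem_product, Finset.mem_singleton] at hpa
    rw [hQf, Finset.mem_filter]
    refine ⟨Finset.mem_univ _, ?_⟩
    have := hpa.2
    rw [Finset.mem_compl, hrow, Finset.mem_filter] at this
    rw [hpa.1]
    intro hadj
    exact this ⟨Finset.mem_univ _, hadj⟩
  have hQmQf : Qm ⊆ Qf := by
    intro p hp
    rw [hQm, Finset.mem_biUnion] at hp
    obtain ⟨a, _, hpa⟩ := hp
    rw [Finset.mem_product, Finset.mem_singleton] at hpa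
    rw [hQf, Finset.mem_filter]
    refine ⟨Finset.mem_univ _, ?_⟩
    have := hpa.1
    rw [Finset.mem_compl, hcol, Finset.mem_filter] at this
    rw [hpa.2]
    intro hadj
    exact this ⟨Finset.mem_univ _, hadj⟩
  have hQpm : Qp ∩ Qm ⊆ (Bp i0) ×ˢ (Bm i0) := by
    intro p hp
    rw [Finset.mem_inter] at hp
    obtain ⟨hp1, hp2⟩ := hp
    rw [hQp, Finset.mem_biUnion] at hp1
    rw [hQm, Finset.mem_biUnion] at hp2
    obtain ⟨a, ha, hpa⟩ := hp1
    obtain ⟨b, hb, hpb⟩ := hp2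
    rw [Finset.mem_product, Finset.mem_singleton] at hpa hpb
    rw [Finset.mem_product]
    exact ⟨hpa.1 ▸ ha, hpb.2 ▸ hb⟩
  -- inclusion-exclusion bound on Qf
  have hQie : (Qp.card : ℝ) + (Qm.card : ℝ) - ((Bp i0).card : ℝ) * ((Bm i0).card : ℝ)
      ≤ (Qf.card : ℝ) := by
    have h1 : Qp.card + Qm.card = (Qp ∪ Qm).card + (Qp ∩ Qm).card :=
      (Finset.card_union_add_card_inter _ _).symm
    have h2 : (Qp ∪ Qm).card ≤ Qf.card :=
      Finset.card_le_card (Finset.union_subset hQpQf hQmQf)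
    have h3 : (Qp ∩ Qm).card ≤ (Bp i0).card * (Bm i0).card := by
      refine le_trans (Finset.card_le_card hQpm) ?_
      rw [Finset.card_product]
    have h1' : (Qp.card : ℝ) + Qm.card = ((Qp ∪ Qm).card : ℝ) + ((Qp ∩ Qm).card : ℝ) := by
      exact_mod_cast h1
    have h2' : ((Qp ∪ Qm).card : ℝ) ≤ (Qf.card : ℝ) := by exact_mod_cast h2
    have h3' : ((Qp ∩ Qm).card : ℝ) ≤ ((Bp i0).card : ℝ) * ((Bm i0).card : ℝ) := by
      exact_mod_cast h3
    linarith
  -- the strict bound on the number of missing pairs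
  have hQ : ε ^ 2 * (N : ℝ) ^ 2 / (2 * d) < (Qf.card : ℝ) := by
    set bp : ℝ := ((Bp i0).card : ℝ) with hbp
    set bm : ℝ := ((Bm i0).card : ℝ) with hbm
    have hbp0 : 0 ≤ bp := Nat.cast_nonneg _
    have hbm0 : 0 ≤ bm := Nat.cast_nonneg _
    have hQ1 : bp * (ε * N) ≤ (Qf.card : ℝ) :=
      le_trans hQpcard (by exact_mod_cast Finset.card_le_card hQpQf)
    have hQ2 : bm * (ε * N) ≤ (Qf.card : ℝ) :=
      le_trans hQmcard (by exact_mod_cast Finset.card_le_card hQmQf)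
    have hQ3 : (Qp.card : ℝ) + (Qm.card : ℝ) - bp * bm ≤ (Qf.card : ℝ) := hQie
    have hQ3' : bp * (ε * N) + bm * (ε * N) - bp * bm ≤ (Qf.card : ℝ) := by
      linarith [hQpcard, hQmcard]
    have hbpbm : bp * bm ≤ (bp + bm) ^ 2 / 4 := by nlinarith [sq_nonneg (bp - bm)]
    have hεN : 0 < ε * N := mul_pos hε hNpos
    have h2d : (0:ℝ) < 2 * d := by linarith
    rcases eq_or_lt_of_le hkey0 with he | hlt
    · -- d * (bp + bm) = ε * N exactly
      rw [div_lt_iff₀ h2d]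
      nlinarith [sq_nonneg (ε * N), mul_pos hεN hεN, hQ3', hbpbm, he, hd1]
    · -- ε * N < d * (bp + bm)
      rw [div_lt_iff₀ h2d]
      nlinarith [hQ1, hQ2, hlt, hεN, hd1]
  -- bound on allowed pairs
  have hPlt : (P : ℝ) < (N : ℝ) ^ 2 * ((2 * d - ε ^ 2) / (2 * d)) := by
    have h2d : (0:ℝ) < 2 * d := by linarith
    have hcast : (P : ℝ) + (Qf.card : ℝ) = (N : ℝ) ^ 2 := by
      have h' : (P : ℝ) + (Qf.card : ℝ) = (N : ℝ) * (N : ℝ) := by exact_mod_cast hPQ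
      nlinarith [h']
    have hiden : (N : ℝ) ^ 2 * ((2 * d - ε ^ 2) / (2 * d)) =
        (N : ℝ) ^ 2 - ε ^ 2 * (N : ℝ) ^ 2 / (2 * d) := by
      field_simp
    rw [hiden]
    linarith [hQ]
  -- P is at least 1
  have hP1 : 1 ≤ P := by
    have hmem : x0 ((0 : Site d) + unitVec d i0) ∈ row i0 (x0 0) := by
      rw [hrow, Finset.mem_filter]
      exact ⟨Finset.mem_univ _, hx0 i0 0⟩
    calc 1 ≤ (row i0 (x0 0)).card := Finset.card_pos.2 ⟨_, hmem⟩
      _ ≤ P := Finset.single_le_sum (f := fun a => (row i0 a).card)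
          (fun a _ => Nat.zero_le _) (Finset.mem_univ _)
  -- relate P to the set count
  have hPsetP : ({p : A × A | X.adj i0 p.1 p.2}).ncard = P := by
    rw [show {p : A × A | X.adj i0 p.1 p.2} =
      ↑(Finset.univ.filter (fun p : A × A => X.adj i0 p.1 p.2)) by ext p; simp,
      Set.ncard_coe_finset, hfilterP]
  -- the counting bound on the side-2 cube
  have hL : X.langCard (cube d 2) ≤ P ^ 2 ^ (d - 1) := by
    have := myKey_count X hd i0 (by rw [hPsetP]; exact hP1)
    rwa [hPsetP] at this
  -- entropy bound
  have hent : X.entropy ≤ Real.log (X.langCard (cube d 2)) / (2 : ℝ) ^ d := by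
    have h := myEntropy_le X hXne 2
    have h2 : ((2 : ℕ+) : ℕ) = 2 := rfl
    rw [h2] at h
    exact_mod_cast h
  have hLpos : 0 < X.langCard (cube d 2) := myLangCard_pos X hXne 2
  have hlog1 : Real.log (X.langCard (cube d 2)) ≤ (2 : ℝ) ^ (d - 1) * Real.log P := by
    calc Real.log (X.langCard (cube d 2)) ≤ Real.log ((P : ℝ) ^ 2 ^ (d - 1)) := by
          apply Real.log_le_log (by exact_mod_cast hLpos)
          exact_mod_cast hL
      _ = (2 : ℝ) ^ (d - 1) * Real.log P := by
          rw [Real.log_pow]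
          push_cast
          ring
  have hPpos : (0:ℝ) < P := by exact_mod_cast hP1
  have hlogP0 : 0 ≤ Real.log P := Real.log_nonneg (by exact_mod_cast hP1)
  have h2dpow : (2:ℝ) ^ d = 2 * (2:ℝ) ^ (d - 1) := by
    conv_lhs => rw [show d = (d - 1) + 1 by omega]
    rw [pow_succ]
    ring
  have h2dpowpos : (0:ℝ) < (2:ℝ) ^ d := by positivity
  have hhalf : Real.log (X.langCard (cube d 2)) / (2 : ℝ) ^ d ≤ (1/2) * Real.log P := by
    rw [div_le_iff₀ h2dpowpos]
    calc Real.log (X.langCard (cube d 2)) ≤ (2 : ℝ) ^ (d - 1) * Real.log P := hlog1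
      _ = (1/2) * Real.log P * (2:ℝ) ^ d := by rw [h2dpow]; ring
  -- the strict log comparison
  have h2d : (0:ℝ) < 2 * d := by linarith
  have hde : (0:ℝ) < 2 * d - ε ^ 2 := by nlinarith
  have hlogP : Real.log P < Real.log ((N : ℝ) ^ 2 * ((2 * d - ε ^ 2) / (2 * d))) :=
    Real.log_lt_log hPpos hPlt
  have hlogsplit : Real.log ((N : ℝ) ^ 2 * ((2 * d - ε ^ 2) / (2 * d))) =
      2 * Real.log N - (Real.log (2 * d) - Real.log (2 * d - ε ^ 2)) := by
    rw [Real.log_mul (by positivity) (by positivity), Real.log_div (ne_of_gt hde)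
      (ne_of_gt h2d), Real.log_pow]
    push_cast
    ring
  have hlogdiv : Real.log ((2 * d) / (2 * d - ε ^ 2)) =
      Real.log (2 * d) - Real.log (2 * d - ε ^ 2) :=
    Real.log_div (ne_of_gt h2d) (ne_of_gt hde)
  have goal1 : X.entropy < Real.log (N : ℝ) -
      (1 / 2) * Real.log ((2 * d) / (2 * d - ε ^ 2)) := by
    have c1 : X.entropy ≤ (1/2) * Real.log P := le_trans hent hhalf
    have c2 : (1/2) * Real.log P < (1/2) * (2 * Real.log N -
        (Real.log (2 * d) - Real.log (2 * d - ε ^ 2))) := by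
      have := hlogP
      rw [hlogsplit] at this
      linarith
    rw [hlogdiv]
    linarith
  refine ⟨goal1, ?_⟩
  -- second bound via log x ≤ x - 1
  have hx : (0:ℝ) < (2 * d - ε ^ 2) / (2 * d) := by positivity
  have hlb : Real.log ((2 * d - ε ^ 2) / (2 * d)) ≤ (2 * d - ε ^ 2) / (2 * d) - 1 :=
    Real.log_le_sub_one_of_pos hx
  have hswap : Real.log ((2 * d - ε ^ 2) / (2 * d)) =
      - Real.log ((2 * d) / (2 * d - ε ^ 2)) := by
    rw [hlogdiv, Real.log_div (ne_of_gt hde) (ne_of_gt h2d)]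
    ring
  have hfrac : (2 * d - ε ^ 2) / (2 * d) - 1 = - (ε ^ 2 / (2 * d)) := by
    field_simp
    ring
  have hge : ε ^ 2 / (2 * d) ≤ Real.log ((2 * d) / (2 * d - ε ^ 2)) := by
    rw [hswap, hfrac] at hlb
    linarith
  have hdiv : ε ^ 2 / (4 * d) = (1/2) * (ε ^ 2 / (2 * d)) := by
    field_simp
    ring
  calc X.entropy < Real.log (N : ℝ) -
      (1 / 2) * Real.log ((2 * d) / (2 * d - ε ^ 2)) := goal1
    _ ≤ Real.log (N : ℝ) - ε ^ 2 / (4 * d) := by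
        rw [hdiv]
        linarith
end

section
/- If a nearest neighbor Z^d shift of finite type X with alphabet A is ε-full with ε < 1/(2d+2), then for every n the number of globally admissible configurations on the cube [1,n]^d exceeds (|A|(1-(d+1)ε))^{n^d}, and consequently h(X) > log|A| + log(1-(d+1)ε). In particular, if ε = (1-e^{-β})/(d+1) then h(X) > log|A| - β. -/
open MeasureTheory

section EpsAux

namespace EpsAux

variable {d : ℕ} {A : Type} [Fintype A]

lemma add_unitVec_ne (v : Site d) (i : Fin d) : v + unitVec d i ≠ v := by
  intro h
  have h2 : v i + 1 = v i := by simpa [unitVec] using congrFun h i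
  omega

/-- letters available at site `v`, given already-assigned configuration `x` on `S`. -/
def availSet (X : NNSFT d A) (G : Set A) (S : Set (Site d)) (x : Site d → A) (v : Site d) :
    Set A :=
  {a | a ∈ G ∧ (∀ i : Fin d, v + unitVec d i ∈ S → X.adj i a (x (v + unitVec d i))) ∧
       (∀ i : Fin d, v - unitVec d i ∈ S → X.adj i (x (v - unitVec d i)) a)}

lemma compl_small {ε : ℝ} {s : Set A} (h : ((s.ncard : ℝ)) > (1 - ε) * Fintype.card A) :
    ((sᶜ.ncard : ℝ)) < ε * Fintype.card A := by
  have hc : s.ncard + sᶜ.ncard = Fintype.card A := by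
    rw [Set.ncard_add_ncard_compl, Nat.card_eq_fintype_card]
  have h2 : ((s.ncard : ℝ)) + sᶜ.ncard = Fintype.card A := by exact_mod_cast hc
  nlinarith [h2]

omit [Fintype A] in
lemma ncard_biUnion_le {ι : Type*} (s : Finset ι) (C : ι → Set A) :
    (⋃ i ∈ s, C i).ncard ≤ ∑ i ∈ s, (C i).ncard := by
  classical
  induction s using Finset.induction with
  | empty => simp
  | insert a s' h ih =>
    rw [Finset.set_biUnion_insert, Finset.sum_insert h]
    exact le_trans (Set.ncard_union_le _ _) (by omega)

variable {X : NNSFT d A} {ε : ℝ} {G : Set A}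

lemma availSet_compl_bounds (hfull : X.epsFullWith ε G) (hε : 0 < ε) (hA : Nonempty A)
    {S : Set (Site d)} {x : Site d → A} (hG : ∀ u ∈ S, x u ∈ G) (v : Site d) :
    (((availSet X G S x v)ᶜ.ncard : ℝ)) < (2 * d + 1) * (ε * Fintype.card A) ∧
    ((∀ i : Fin d, v + unitVec d i ∉ S) →
      (((availSet X G S x v)ᶜ.ncard : ℝ)) < (d + 1) * (ε * Fintype.card A)) := by
  have hN : (0 : ℝ) < Fintype.card A := by exact_mod_cast Fintype.card_pos
  have hεN : (0 : ℝ) < ε * Fintype.card A := by positivity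
  set P : Fin d → Set A :=
    fun i => {a | v + unitVec d i ∈ S ∧ ¬ X.adj i a (x (v + unitVec d i))} with hP
  set Q : Fin d → Set A :=
    fun i => {a | v - unitVec d i ∈ S ∧ ¬ X.adj i (x (v - unitVec d i)) a} with hQ
  have hsub : (availSet X G S x v)ᶜ ⊆
      Gᶜ ∪ ((⋃ i ∈ (Finset.univ : Finset (Fin d)), P i) ∪
            (⋃ i ∈ (Finset.univ : Finset (Fin d)), Q i)) := by
    intro a ha
    simp only [availSet, Set.mem_setOf_eq, Set.mem_compl_iff] at ha
    rcases not_and_or.mp ha with h | h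
    · exact Or.inl h
    rcases not_and_or.mp h with h | h
    · obtain ⟨i, hi⟩ := not_forall.mp h
      push_neg at hi
      exact Or.inr (Or.inl (Set.mem_biUnion (Finset.mem_univ i) hi))
    · obtain ⟨i, hi⟩ := not_forall.mp h
      push_neg at hi
      exact Or.inr (Or.inr (Set.mem_biUnion (Finset.mem_univ i) hi))
  have hPcard : ∀ i : Fin d, (((P i).ncard : ℝ)) < ε * Fintype.card A := by
    intro i
    by_cases hi : v + unitVec d i ∈ S
    · have hg := hG _ hi
      have hcnt := (hfull.2 _ hg i).2
      have hs2 : P i ⊆ {a | X.adj i a (x (v + unitVec d i))}ᶜ := fun a ha => ha.2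
      have := Set.ncard_le_ncard hs2 (Set.toFinite _)
      calc (((P i).ncard : ℝ)) ≤ (({a | X.adj i a (x (v + unitVec d i))}ᶜ.ncard : ℝ)) := by
            exact_mod_cast this
        _ < ε * Fintype.card A := compl_small hcnt
    · have : P i = ∅ := Set.eq_empty_of_forall_notMem fun a ha => hi ha.1
      rw [this]
      simpa using hεN
  have hQcard : ∀ i : Fin d, (((Q i).ncard : ℝ)) < ε * Fintype.card A := by
    intro i
    by_cases hi : v - unitVec d i ∈ S
    · have hg := hG _ hi
      have hcnt := (hfull.2 _ hg i).1
      have hs2 : Q i ⊆ {a | X.adj i (x (v - unitVec d i)) a}ᶜ := fun a ha => ha.2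
      have := Set.ncard_le_ncard hs2 (Set.toFinite _)
      calc (((Q i).ncard : ℝ)) ≤ (({a | X.adj i (x (v - unitVec d i)) a}ᶜ.ncard : ℝ)) := by
            exact_mod_cast this
        _ < ε * Fintype.card A := compl_small hcnt
    · have : Q i = ∅ := Set.eq_empty_of_forall_notMem fun a ha => hi ha.1
      rw [this]
      simpa using hεN
  have hGc : ((Gᶜ.ncard : ℝ)) < ε * Fintype.card A := compl_small hfull.1
  have hPsum : ((∑ i : Fin d, (P i).ncard : ℕ) : ℝ) ≤ d * (ε * Fintype.card A) := by
    push_cast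
    calc (∑ i : Fin d, ((P i).ncard : ℝ)) ≤ ∑ _i : Fin d, ε * Fintype.card A :=
          Finset.sum_le_sum fun i _ => (hPcard i).le
      _ = d * (ε * Fintype.card A) := by simp [Finset.sum_const]
  have hQsum : ((∑ i : Fin d, (Q i).ncard : ℕ) : ℝ) ≤ d * (ε * Fintype.card A) := by
    push_cast
    calc (∑ i : Fin d, ((Q i).ncard : ℝ)) ≤ ∑ _i : Fin d, ε * Fintype.card A :=
          Finset.sum_le_sum fun i _ => (hQcard i).le
      _ = d * (ε * Fintype.card A) := by simp [Finset.sum_const]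
  constructor
  · have h1 : (availSet X G S x v)ᶜ.ncard ≤
        Gᶜ.ncard + ((∑ i : Fin d, (P i).ncard) + (∑ i : Fin d, (Q i).ncard)) := by
      refine le_trans (Set.ncard_le_ncard hsub (Set.toFinite _)) ?_
      refine le_trans (Set.ncard_union_le _ _) ?_
      refine Nat.add_le_add_left ?_ _
      refine le_trans (Set.ncard_union_le _ _) ?_
      exact Nat.add_le_add (ncard_biUnion_le _ _) (ncard_biUnion_le _ _)
    have h1' : (((availSet X G S x v)ᶜ.ncard : ℝ)) ≤
        ((Gᶜ.ncard : ℝ)) + (((∑ i : Fin d, (P i).ncard : ℕ) : ℝ) +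
          ((∑ i : Fin d, (Q i).ncard : ℕ) : ℝ)) := by exact_mod_cast h1
    nlinarith [h1']
  · intro hsucc
    have hPempty : ∀ i : Fin d, P i = ∅ := fun i =>
      Set.eq_empty_of_forall_notMem fun a ha => hsucc i ha.1
    have hsub2 : (availSet X G S x v)ᶜ ⊆
        Gᶜ ∪ (⋃ i ∈ (Finset.univ : Finset (Fin d)), Q i) := by
      intro a ha
      rcases hsub ha with h | h
      · exact Or.inl h
      rcases h with h | h
      · exfalso
        obtain ⟨i, _, hi⟩ := Set.mem_iUnion₂.mp h
        rw [hPempty i] at hi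
        exact hi
      · exact Or.inr h
    have h1 : (availSet X G S x v)ᶜ.ncard ≤
        Gᶜ.ncard + (∑ i : Fin d, (Q i).ncard) := by
      refine le_trans (Set.ncard_le_ncard hsub2 (Set.toFinite _)) ?_
      refine le_trans (Set.ncard_union_le _ _) ?_
      exact Nat.add_le_add_left (ncard_biUnion_le _ _) _
    have h1' : (((availSet X G S x v)ᶜ.ncard : ℝ)) ≤
        ((Gᶜ.ncard : ℝ)) + ((∑ i : Fin d, (Q i).ncard : ℕ) : ℝ) := by exact_mod_cast h1
    nlinarith [h1']

lemma availSet_nonempty (hfull : X.epsFullWith ε G) (hε : 0 < ε) (hA : Nonempty A)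
    (hεs : ε < 1 / (2 * (d : ℝ) + 2))
    {S : Set (Site d)} {x : Site d → A} (hG : ∀ u ∈ S, x u ∈ G) (v : Site d) :
    (availSet X G S x v).Nonempty := by
  have hN : (0 : ℝ) < Fintype.card A := by exact_mod_cast Fintype.card_pos
  have hb := (availSet_compl_bounds hfull hε hA hG v).1
  have hd2 : (0:ℝ) < 2 * (d:ℝ) + 2 := by positivity
  have hlt : (2 * (d : ℝ) + 1) * (ε * Fintype.card A) < Fintype.card A := by
    have h0 : (0:ℝ) < 2 * (d:ℝ) + 1 := by positivity
    have h1 : (2*(d:ℝ)+1)*ε < (2*(d:ℝ)+1)*(1/(2*(d:ℝ)+2)) :=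
      mul_lt_mul_of_pos_left hεs h0
    have h2 : (2*(d:ℝ)+1)*(1/(2*(d:ℝ)+2)) < 1 := by
      rw [mul_one_div]
      exact (div_lt_one hd2).mpr (by linarith)
    nlinarith
  rw [Set.nonempty_iff_ne_empty]
  intro hemp
  have : (availSet X G S x v)ᶜ = Set.univ := by rw [hemp, Set.compl_empty]
  rw [this, Set.ncard_univ, Nat.card_eq_fintype_card] at hb
  linarith

lemma availSet_ncard_gt (hfull : X.epsFullWith ε G) (hε : 0 < ε) (hA : Nonempty A)
    {S : Set (Site d)} {x : Site d → A} (hG : ∀ u ∈ S, x u ∈ G) (v : Site d)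
    (hsucc : ∀ i : Fin d, v + unitVec d i ∉ S) :
    (((availSet X G S x v).ncard : ℝ)) >
      Fintype.card A - ((d : ℝ) + 1) * (ε * Fintype.card A) := by
  have hb := (availSet_compl_bounds hfull hε hA hG v).2 hsucc
  have hc : (availSet X G S x v).ncard + (availSet X G S x v)ᶜ.ncard = Fintype.card A := by
    rw [Set.ncard_add_ncard_compl, Nat.card_eq_fintype_card]
  have hc' : (((availSet X G S x v).ncard : ℝ)) + (((availSet X G S x v)ᶜ.ncard : ℝ))
      = Fintype.card A := by exact_mod_cast hc
  linarith

open Classical in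
noncomputable def pickEl [Nonempty A] (s : Set A) : A :=
  if h : s.Nonempty then h.choose else Classical.arbitrary A

omit [Fintype A] in
lemma pickEl_mem [Nonempty A] {s : Set A} (h : s.Nonempty) : pickEl s ∈ s := by
  rw [pickEl, dif_pos h]; exact h.choose_spec

lemma exists_extension (hd : 0 < d) (hfull : X.epsFullWith ε G) (hε : 0 < ε)
    (hεs : ε < 1 / (2 * (d : ℝ) + 2)) (hA : Nonempty A)
    (S : Set (Site d)) (w : Site d → A) (hG : ∀ v ∈ S, w v ∈ G) (hadm : X.locAdm S w) :
    ∃ x ∈ X.pts, ∀ v ∈ S, x v = w v := by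
  classical
  haveI : Infinite (Site d) := Infinite.of_injective (fun z : ℤ => (fun _ => z : Site d))
    (fun a b h => by simpa using congrFun h ⟨0, hd⟩)
  obtain ⟨e⟩ : Nonempty (ℕ ≃ Site d) := nonempty_equiv_of_countable
  let F : ℕ → Site d → A := fun k => Nat.rec (motive := fun _ => Site d → A) w
    (fun k xk => if e k ∈ S then xk else
      Function.update xk (e k) (pickEl (availSet X G (S ∪ e '' Set.Iio k) xk (e k)))) k
  have hFs : ∀ k, F (k+1) = if e k ∈ S then F k else
      Function.update (F k) (e k) (pickEl (availSet X G (S ∪ e '' Set.Iio k) (F k) (e k))) :=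
    fun k => rfl
  have hmem : ∀ (k : ℕ) (v : Site d),
      v ∈ S ∪ e '' Set.Iio (k+1) ↔ (v ∈ S ∪ e '' Set.Iio k) ∨ v = e k := by
    intro k v
    simp only [Set.mem_union, Set.mem_image, Set.mem_Iio]
    constructor
    · rintro (h | ⟨j, hj, rfl⟩)
      · exact Or.inl (Or.inl h)
      · rcases Nat.lt_succ_iff_lt_or_eq.mp hj with h | rfl
        · exact Or.inl (Or.inr ⟨j, h, rfl⟩)
        · exact Or.inr rfl
    · rintro ((h | ⟨j, hj, rfl⟩) | rfl)
      · exact Or.inl h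
      · exact Or.inr ⟨j, Nat.lt_succ_of_lt hj, rfl⟩
      · exact Or.inr ⟨k, Nat.lt_succ_self k, rfl⟩
  have key : ∀ k, (∀ v ∈ S ∪ e '' Set.Iio k, F k v ∈ G) ∧
      X.locAdm (S ∪ e '' Set.Iio k) (F k) ∧ ∀ v ∈ S, F k v = w v := by
    intro k
    induction k with
    | zero =>
      have h0 : S ∪ e '' Set.Iio 0 = S := by
        rw [show Set.Iio (0:ℕ) = ∅ from by ext j; simp, Set.image_empty, Set.union_empty]
      rw [h0]
      exact ⟨hG, hadm, fun v _ => rfl⟩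
    | succ k ih =>
      by_cases hk : e k ∈ S
      · have hSeq : S ∪ e '' Set.Iio (k+1) = S ∪ e '' Set.Iio k := by
          ext v
          rw [hmem]
          constructor
          · rintro (h | rfl)
            · exact h
            · exact Or.inl hk
          · exact Or.inl
        rw [hFs k, if_pos hk, hSeq]
        exact ih
      · rw [hFs k, if_neg hk]
        have hane : pickEl (availSet X G (S ∪ e '' Set.Iio k) (F k) (e k)) ∈
            availSet X G (S ∪ e '' Set.Iio k) (F k) (e k) :=
          pickEl_mem (availSet_nonempty hfull hε hA hεs ih.1 (e k))
        set a := pickEl (availSet X G (S ∪ e '' Set.Iio k) (F k) (e k)) with haa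
        set Sk := S ∪ e '' Set.Iio k with hSk
        have heknot : e k ∉ Sk := by
          intro h
          rcases h with h | ⟨j, hj, hje⟩
          · exact hk h
          · exact absurd (e.injective hje) (Nat.ne_of_lt hj)
        constructor
        · intro v hv
          rcases (hmem k v).mp hv with hv | rfl
          · rw [Function.update_of_ne (fun h => heknot (by rw [← h]; exact hv))]
            exact ih.1 v hv
          · rw [Function.update_self]
            exact hane.1
        refine ⟨?_, ?_⟩
        · intro i v hv hv2
          rcases (hmem k v).mp hv with hv | rfl
          · rcases (hmem k _).mp hv2 with hv2 | hv2
            · have h1 : v ≠ e k := fun h => heknot (by rw [← h]; exact hv)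
              have h2 : v + unitVec d i ≠ e k := fun h => heknot (by rw [← h]; exact hv2)
              rw [Function.update_of_ne h1, Function.update_of_ne h2]
              exact ih.2.1 i v hv hv2
            · have h1 : v ≠ e k := fun h => heknot (by rw [← h]; exact hv)
              have hveq : e k - unitVec d i = v := by rw [← hv2]; abel
              rw [Function.update_of_ne h1, hv2, Function.update_self]
              have h3 := hane.2.2 i (by rw [hveq]; exact hv)
              rw [hveq] at h3
              exact h3
          · rcases (hmem k _).mp hv2 with hv2 | hv2
            · have h2 : e k + unitVec d i ≠ e k := add_unitVec_ne _ i
              rw [Function.update_self, Function.update_of_ne h2]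
              exact hane.2.1 i hv2
            · exact absurd hv2 (add_unitVec_ne _ i)
        · intro v hv
          rw [Function.update_of_ne (fun h => hk (by rw [← h]; exact hv))]
          exact ih.2.2 v hv
  have stab : ∀ (v : Site d) (k : ℕ), e.symm v < k → F k v = F (e.symm v + 1) v := by
    intro v k
    induction k with
    | zero => omega
    | succ k ih =>
      intro hk
      rcases Nat.lt_succ_iff_lt_or_eq.mp hk with h | h
      · have hne : v ≠ e k := by
          intro hve
          rw [hve, Equiv.symm_apply_apply] at h
          omega
        rw [hFs k]
        split_ifs with hq
        · exact ih h
        · rw [Function.update_of_ne hne]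
          exact ih h
      · rw [h]
  refine ⟨fun v => F (e.symm v + 1) v, ?_, ?_⟩
  · intro i v
    set k := max (e.symm v) (e.symm (v + unitVec d i)) + 1 with hkdef
    have hv : v ∈ S ∪ e '' Set.Iio k :=
      Set.mem_union_right _ ⟨e.symm v, Nat.lt_succ_of_le (le_max_left _ _), e.apply_symm_apply v⟩
    have hv2 : v + unitVec d i ∈ S ∪ e '' Set.Iio k :=
      Set.mem_union_right _ ⟨e.symm (v + unitVec d i), Nat.lt_succ_of_le (le_max_right _ _),
        e.apply_symm_apply _⟩
    have hadj := (key k).2.1 i v hv hv2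
    have h1 := stab v k (Nat.lt_succ_of_le (le_max_left _ _))
    have h2 := stab (v + unitVec d i) k (Nat.lt_succ_of_le (le_max_right _ _))
    rw [h1, h2] at hadj
    exact hadj
  · intro v hv
    exact (key (e.symm v + 1)).2.2 v hv

def siteMap {d n : ℕ} (p : Fin d → Fin n) : Site d := fun i => (p i : ℤ) + 1

omit [Fintype A] in
lemma siteMap_mem_cube {n : ℕ} (p : Fin d → Fin n) : siteMap p ∈ cube d n := by
  intro i
  have h : ((p i : ℕ) : ℤ) < n := by exact_mod_cast (p i).isLt
  simp only [siteMap]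
  omega

omit [Fintype A] in
lemma siteMap_inj {n : ℕ} : Function.Injective (siteMap (d := d) (n := n)) := by
  intro p q h
  funext i
  have h2 := congrFun h i
  simp only [siteMap, add_left_inj] at h2
  exact Fin.ext (by exact_mod_cast h2)

omit [Fintype A] in
lemma mem_cube_exists {n : ℕ} {v : Site d} (hv : v ∈ cube d n) :
    ∃ p : Fin d → Fin n, siteMap p = v := by
  refine ⟨fun i => ⟨(v i - 1).toNat, ?_⟩, ?_⟩
  · have := hv i; omega
  · funext i
    have := hv i
    simp only [siteMap]
    omega

def idx {d n : ℕ} (p : Fin d → Fin n) : ℕ := (finFunctionFinEquiv p : ℕ)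

omit [Fintype A] in
lemma idx_lt {n : ℕ} (p : Fin d → Fin n) : idx p < n ^ d := (finFunctionFinEquiv p).isLt

omit [Fintype A] in
lemma idx_symm_apply {n : ℕ} {k : ℕ} (h : k < n ^ d) :
    idx ((finFunctionFinEquiv (m := n) (n := d)).symm ⟨k, h⟩) = k := by
  unfold idx
  rw [Equiv.apply_symm_apply]

omit [Fintype A] in
lemma idx_succ {n : ℕ} {p q : Fin d → Fin n} {i : Fin d}
    (h : siteMap p = siteMap q + unitVec d i) : idx p = idx q + n ^ (i : ℕ) := by
  have hco : ∀ j, (p j : ℕ) = (q j : ℕ) + (if j = i then 1 else 0) := by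
    intro j
    have hj := congrFun h j
    simp only [siteMap, Pi.add_apply, unitVec] at hj
    split_ifs with hji
    · rw [if_pos hji] at hj; omega
    · rw [if_neg hji] at hj; omega
  unfold idx
  rw [finFunctionFinEquiv_apply, finFunctionFinEquiv_apply]
  calc (∑ j, (p j : ℕ) * n ^ (j : ℕ))
      = ∑ j, ((q j : ℕ) * n ^ (j : ℕ) + (if j = i then n ^ (i : ℕ) else 0)) := by
        refine Finset.sum_congr rfl fun j _ => ?_
        rw [hco j]
        split_ifs with hji
        · subst hji; ring
        · ring
    _ = (∑ j, (q j : ℕ) * n ^ (j : ℕ)) + n ^ (i : ℕ) := by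
        rw [Finset.sum_add_distrib]
        simp

noncomputable def pickNth [Nonempty A] (s : Set A) (j : ℕ) : A :=
  (s.toFinite.toFinset.toList).getD j (Classical.arbitrary A)

omit [Fintype A] in
lemma pickNth_len [Finite A] {s : Set A} : s.toFinite.toFinset.toList.length = s.ncard := by
  rw [Finset.length_toList, Set.ncard_eq_toFinset_card]

lemma pickNth_mem [Nonempty A] {s : Set A} {j : ℕ} (h : j < s.ncard) : pickNth s j ∈ s := by
  have hlen : s.toFinite.toFinset.toList.length = s.ncard := pickNth_len
  rw [pickNth, List.getD_eq_getElem _ _ (by rw [hlen]; exact h)]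
  have hmem := List.getElem_mem (l := s.toFinite.toFinset.toList) (n := j)
    (by rw [hlen]; exact h)
  rw [Finset.mem_toList, Set.Finite.mem_toFinset] at hmem
  exact hmem

lemma pickNth_inj [Nonempty A] {s : Set A} {j1 j2 : ℕ} (h1 : j1 < s.ncard)
    (h2 : j2 < s.ncard) (hne : j1 ≠ j2) : pickNth s j1 ≠ pickNth s j2 := by
  have hlen : s.toFinite.toFinset.toList.length = s.ncard := pickNth_len
  rw [pickNth, pickNth, List.getD_eq_getElem _ _ (by rw [hlen]; exact h1),
    List.getD_eq_getElem _ _ (by rw [hlen]; exact h2)]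
  intro h
  exact hne (((Finset.nodup_toList _).getElem_inj_iff).mp h)

lemma cube_count (hd : 0 < d) (hfull : X.epsFullWith ε G) (hε : 0 < ε)
    (hεs : ε < 1 / (2 * (d : ℝ) + 2)) (hA : Nonempty A) (n m : ℕ) (hn : 0 < n)
    (hm : ∀ k : ℕ, ((k : ℝ) > Fintype.card A - ((d : ℝ) + 1) * (ε * Fintype.card A)) → m ≤ k) :
    ∃ f : ((Fin d → Fin n) → Fin m) → (↥(cube d n) → A),
      Function.Injective f ∧ ∀ t, f t ∈ X.langSet (cube d n) := by
  classical
  let EE := (finFunctionFinEquiv (m := n) (n := d))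
  let Sk : ℕ → Set (Site d) := fun k => siteMap '' {p : Fin d → Fin n | idx p < k}
  let seq : ((Fin d → Fin n) → Fin m) → ℕ → Site d → A := fun t k =>
    Nat.rec (motive := fun _ => Site d → A) (fun _ => Classical.arbitrary A)
      (fun k xk => if h : k < n ^ d then
          Function.update xk (siteMap (EE.symm ⟨k, h⟩))
            (pickNth (availSet X G (Sk k) xk (siteMap (EE.symm ⟨k, h⟩))) (t (EE.symm ⟨k, h⟩)))
        else xk) k
  have hseq : ∀ t k, seq t (k + 1) = if h : k < n ^ d then
      Function.update (seq t k) (siteMap (EE.symm ⟨k, h⟩))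
        (pickNth (availSet X G (Sk k) (seq t k) (siteMap (EE.symm ⟨k, h⟩))) (t (EE.symm ⟨k, h⟩)))
    else seq t k := fun t k => rfl
  have hnotin : ∀ (k : ℕ) (h : k < n ^ d), siteMap (EE.symm ⟨k, h⟩) ∉ Sk k := by
    rintro k h ⟨p, hp, hps⟩
    have hpe := siteMap_inj hps
    have hp' : idx p < k := hp
    rw [hpe, idx_symm_apply] at hp'
    exact lt_irrefl _ hp'
  have hnosucc : ∀ (k : ℕ) (h : k < n ^ d) (i : Fin d),
      siteMap (EE.symm ⟨k, h⟩) + unitVec d i ∉ Sk k := by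
    rintro k h i ⟨p, hp, hps⟩
    have hidx := idx_succ (p := p) (q := EE.symm ⟨k, h⟩) (i := i) hps
    rw [idx_symm_apply] at hidx
    have hpow : 0 < n ^ (i : ℕ) := pow_pos hn _
    have hp' : idx p < k := hp
    omega
  have hstab : ∀ t (v : Site d) (k j : ℕ), v ∈ Sk k → k ≤ j → seq t j v = seq t k v := by
    intro t v k j hv hkj
    induction j with
    | zero => rw [Nat.le_zero.mp hkj]
    | succ j ih =>
      by_cases hkj2 : k = j + 1
      · rw [hkj2]
      · have hkj3 : k ≤ j := by omega
        rw [hseq]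
        split_ifs with h
        · have hne : v ≠ siteMap (EE.symm ⟨j, h⟩) := by
            obtain ⟨p, hp, rfl⟩ := hv
            intro hvp
            have hpe := siteMap_inj hvp
            have hp' : idx p < k := hp
            rw [hpe, idx_symm_apply] at hp'
            omega
          rw [Function.update_of_ne hne]
          exact ih hkj3
        · exact ih hkj3
  have hmemk : ∀ (k : ℕ) (h : k < n ^ d) (v : Site d),
      v ∈ Sk (k + 1) ↔ v ∈ Sk k ∨ v = siteMap (EE.symm ⟨k, h⟩) := by
    intro k h v
    constructor
    · rintro ⟨p, hp, rfl⟩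
      have hp' : idx p < k + 1 := hp
      rcases Nat.lt_succ_iff_lt_or_eq.mp hp' with h2 | h2
      · exact Or.inl ⟨p, h2, rfl⟩
      · right
        have hEEp : EE p = ⟨k, h⟩ := Fin.ext h2
        rw [← hEEp, Equiv.symm_apply_apply]
    · rintro (⟨p, hp, rfl⟩ | rfl)
      · exact ⟨p, Nat.lt_succ_of_lt hp, rfl⟩
      · exact ⟨EE.symm ⟨k, h⟩, by
          show idx (EE.symm ⟨k, h⟩) < k + 1
          rw [idx_symm_apply]
          omega, rfl⟩
  have hSk_stable : ∀ k, ¬ k < n ^ d → Sk (k + 1) = Sk k := by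
    intro k hk
    ext v
    constructor
    · rintro ⟨p, hp, rfl⟩
      exact ⟨p, by have h1 : idx p < k + 1 := hp; have := idx_lt p; show idx p < k; omega, rfl⟩
    · rintro ⟨p, hp, rfl⟩
      exact ⟨p, Nat.lt_succ_of_lt hp, rfl⟩
  have hinv : ∀ t k, (∀ v ∈ Sk k, seq t k v ∈ G) ∧ X.locAdm (Sk k) (seq t k) := by
    intro t k
    induction k with
    | zero =>
      have h0 : Sk 0 = ∅ := by
        show siteMap '' {p : Fin d → Fin n | idx p < 0} = ∅
        have he : {p : Fin d → Fin n | idx p < 0} = ∅ := by ext p; simp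
        rw [he, Set.image_empty]
      rw [h0]
      exact ⟨fun v hv => absurd hv (Set.notMem_empty v),
        fun i v hv => absurd hv (Set.notMem_empty v)⟩
    | succ k ih =>
      rw [hseq]
      by_cases h : k < n ^ d
      · rw [dif_pos h]
        have hgt := availSet_ncard_gt hfull hε hA ih.1 (siteMap (EE.symm ⟨k, h⟩)) (hnosucc k h)
        have hmle : m ≤ (availSet X G (Sk k) (seq t k) (siteMap (EE.symm ⟨k, h⟩))).ncard :=
          hm _ hgt
        have hpmem : pickNth (availSet X G (Sk k) (seq t k) (siteMap (EE.symm ⟨k, h⟩)))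
            (t (EE.symm ⟨k, h⟩)) ∈ availSet X G (Sk k) (seq t k) (siteMap (EE.symm ⟨k, h⟩)) :=
          pickNth_mem (lt_of_lt_of_le (t (EE.symm ⟨k, h⟩)).isLt hmle)
        have hsqnot : siteMap (EE.symm ⟨k, h⟩) ∉ Sk k := hnotin k h
        constructor
        · intro v hv
          rcases (hmemk k h v).mp hv with hv | rfl
          · rw [Function.update_of_ne (fun hh => hsqnot (by rw [← hh]; exact hv))]
            exact ih.1 v hv
          · rw [Function.update_self]
            exact hpmem.1
        · intro i v hv hv2
          rcases (hmemk k h v).mp hv with hv | rfl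
          · rcases (hmemk k h _).mp hv2 with hv2 | hv2
            · rw [Function.update_of_ne (fun hh => hsqnot (by rw [← hh]; exact hv)),
                Function.update_of_ne (fun hh => hsqnot (by rw [← hh]; exact hv2))]
              exact ih.2 i v hv hv2
            · have h1 : v ≠ siteMap (EE.symm ⟨k, h⟩) :=
                fun hh => hsqnot (by rw [← hh]; exact hv)
              have hveq : siteMap (EE.symm ⟨k, h⟩) - unitVec d i = v := by rw [← hv2]; abel
              rw [Function.update_of_ne h1, hv2, Function.update_self]
              have h3 := hpmem.2.2 i (by rw [hveq]; exact hv)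
              rw [hveq] at h3
              exact h3
          · rcases (hmemk k h _).mp hv2 with hv2 | hv2
            · exact absurd hv2 (hnosucc k h i)
            · exact absurd hv2 (add_unitVec_ne _ i)
      · rw [dif_neg h, hSk_stable k h]
        exact ih
  have hagree : ∀ t t' (K : ℕ), (∀ p, idx p < K → t p = t' p) →
      ∀ k, k ≤ K → seq t k = seq t' k := by
    intro t t' K hK k
    induction k with
    | zero => intro _; rfl
    | succ k ih =>
      intro hk
      rw [hseq, hseq, ih (by omega)]
      by_cases h : k < n ^ d
      · rw [dif_pos h, dif_pos h, hK _ (by rw [idx_symm_apply]; omega)]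
      · rw [dif_neg h, dif_neg h]
  have hcubeSk : ∀ v ∈ cube d n, v ∈ Sk (n ^ d) := by
    intro v hv
    obtain ⟨p, rfl⟩ := mem_cube_exists hv
    exact ⟨p, idx_lt p, rfl⟩
  refine ⟨fun t => (cube d n).restrict (seq t (n ^ d)), ?_, ?_⟩
  · intro t t' heq
    by_contra hne
    obtain ⟨p₀0, hp₀0⟩ := Function.ne_iff.mp hne
    have hPex : ∃ K, ∃ p : Fin d → Fin n, idx p = K ∧ t p ≠ t' p := ⟨idx p₀0, p₀0, rfl, hp₀0⟩
    obtain ⟨p₀, hidx0, hne0⟩ := Nat.find_spec hPex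
    set K := Nat.find hPex with hKdef
    have hbelow : ∀ q : Fin d → Fin n, idx q < K → t q = t' q := by
      intro q hq
      by_contra hne'
      exact Nat.find_min hPex hq ⟨q, rfl, hne'⟩
    have hseqK : seq t K = seq t' K := hagree t t' K hbelow K le_rfl
    have hKlt : K < n ^ d := hidx0 ▸ idx_lt p₀
    have hEEp : EE.symm ⟨K, hKlt⟩ = p₀ := by
      have h1 : EE p₀ = ⟨K, hKlt⟩ := Fin.ext hidx0
      rw [← h1, Equiv.symm_apply_apply]
    have hgt := availSet_ncard_gt hfull hε hA (hinv t K).1 (siteMap p₀)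
      (by rw [← hEEp]; exact hnosucc K hKlt)
    have hmle : m ≤ (availSet X G (Sk K) (seq t K) (siteMap p₀)).ncard := hm _ hgt
    have hval : seq t (K + 1) (siteMap p₀) =
        pickNth (availSet X G (Sk K) (seq t K) (siteMap p₀)) (t p₀) := by
      rw [hseq, dif_pos hKlt, hEEp, Function.update_self]
    have hval' : seq t' (K + 1) (siteMap p₀) =
        pickNth (availSet X G (Sk K) (seq t K) (siteMap p₀)) (t' p₀) := by
      rw [hseq, dif_pos hKlt, hEEp, ← hseqK, Function.update_self]
    have hdiff : seq t (K + 1) (siteMap p₀) ≠ seq t' (K + 1) (siteMap p₀) := by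
      rw [hval, hval']
      exact pickNth_inj (lt_of_lt_of_le (t p₀).isLt hmle)
        (lt_of_lt_of_le (t' p₀).isLt hmle) (fun hh => hne0 (Fin.ext hh))
    have hmemp : siteMap p₀ ∈ Sk (K + 1) := ⟨p₀, by show idx p₀ < K + 1; omega, rfl⟩
    have e1 : seq t (n ^ d) (siteMap p₀) = seq t (K + 1) (siteMap p₀) :=
      hstab t _ (K + 1) (n ^ d) hmemp hKlt
    have e2 : seq t' (n ^ d) (siteMap p₀) = seq t' (K + 1) (siteMap p₀) :=
      hstab t' _ (K + 1) (n ^ d) hmemp hKlt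
    have hcf := congrFun heq ⟨siteMap p₀, siteMap_mem_cube p₀⟩
    simp only [Set.restrict_apply] at hcf
    change seq t (n ^ d) (siteMap p₀) = seq t' (n ^ d) (siteMap p₀) at hcf
    rw [e1, e2] at hcf
    exact hdiff hcf
  · intro t
    have hGc : ∀ v ∈ cube d n, seq t (n ^ d) v ∈ G := fun v hv =>
      (hinv t (n ^ d)).1 v (hcubeSk v hv)
    have hadm : X.locAdm (cube d n) (seq t (n ^ d)) := fun i v hv hv2 =>
      (hinv t (n ^ d)).2 i v (hcubeSk v hv) (hcubeSk _ hv2)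
    obtain ⟨x, hx, hxw⟩ := exists_extension hd hfull hε hεs hA (cube d n) (seq t (n ^ d)) hGc hadm
    exact ⟨x, hx, funext fun v => hxw v.1 v.2⟩

lemma langSet_finite (X : NNSFT d A) (n : ℕ) : (X.langSet (cube d n)).Finite := by
  have hc : (cube d n).Finite :=
    Set.Finite.subset (Set.finite_range (siteMap (d := d) (n := n)))
      (fun v hv => (mem_cube_exists hv).elim fun p hp => ⟨p, hp⟩)
  haveI := hc.to_subtype
  exact Set.toFinite _

lemma langCard_ge (hd : 0 < d) (hfull : X.epsFullWith ε G) (hε : 0 < ε)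
    (hεs : ε < 1 / (2 * (d : ℝ) + 2)) (hA : Nonempty A) (n m : ℕ) (hn : 0 < n)
    (hm : ∀ k : ℕ, ((k : ℝ) > Fintype.card A - ((d : ℝ) + 1) * (ε * Fintype.card A)) → m ≤ k) :
    m ^ (n ^ d) ≤ X.langCard (cube d n) := by
  classical
  obtain ⟨f, hinj, hmem⟩ := cube_count hd hfull hε hεs hA n m hn hm
  have h1 : Set.range f ⊆ X.langSet (cube d n) := Set.range_subset_iff.mpr hmem
  have h2 := Set.ncard_le_ncard h1 (langSet_finite X n)
  rw [← Nat.card_coe_set_eq, Nat.card_range_of_injective hinj,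
    Nat.card_eq_fintype_card] at h2
  calc m ^ (n ^ d) = Fintype.card ((Fin d → Fin n) → Fin m) := by
        simp [Fintype.card_fun]
    _ ≤ _ := h2

end EpsAux

end EpsAux

theorem epsFull_entropy_gt {d : ℕ} {A : Type} [Fintype A] (X : NNSFT d A)
    (hd : 0 < d) (hX : X.pts.Nonempty) (ε : ℝ) (hε : 0 < ε) (G : Set A)
    (hfull : X.epsFullWith ε G) (hεsmall : ε < 1 / (2 * d + 2)) :
    (∀ n : ℕ, 1 ≤ n →
      (X.langCard (cube d n) : ℝ) >
        ((Fintype.card A : ℝ) * (1 - (d + 1) * ε)) ^ (n ^ d)) ∧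
    X.entropy > Real.log (Fintype.card A) + Real.log (1 - (d + 1) * ε) ∧
    (∀ β : ℝ, 0 < β → ε = (1 - Real.exp (-β)) / (d + 1) →
      X.entropy > Real.log (Fintype.card A) - β) := by
  classical
  obtain ⟨x₀, hx₀⟩ := hX
  have hA : Nonempty A := ⟨x₀ (fun _ => 0)⟩
  have hN : (0 : ℝ) < Fintype.card A := by exact_mod_cast Fintype.card_pos
  have hd2 : (0:ℝ) < 2 * (d:ℝ) + 2 := by positivity
  have hhalf : ((d:ℝ) + 1) * ε < 1 / 2 := by
    have h1 : ((d:ℝ) + 1) * ε < ((d:ℝ) + 1) * (1 / (2 * (d:ℝ) + 2)) :=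
      mul_lt_mul_of_pos_left hεsmall (by positivity)
    have he : ((d:ℝ) + 1) * (1 / (2 * (d:ℝ) + 2)) = 1 / 2 := by
      field_simp
    linarith
  have hc1 : (0:ℝ) < 1 - ((d:ℝ) + 1) * ε := by linarith
  set c : ℝ := (Fintype.card A : ℝ) * (1 - ((d:ℝ) + 1) * ε) with hcdef
  have hcpos : 0 < c := mul_pos hN hc1
  set m : ℕ := ⌊c⌋₊ + 1 with hmdef
  have hm_le : ∀ k : ℕ,
      ((k : ℝ) > Fintype.card A - ((d : ℝ) + 1) * (ε * Fintype.card A)) → m ≤ k := by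
    intro k hk
    have hceq : (Fintype.card A : ℝ) - ((d:ℝ) + 1) * (ε * Fintype.card A) = c := by
      rw [hcdef]; ring
    have hck : c < k := by rw [← hceq]; exact hk
    have h2 : (⌊c⌋₊ : ℝ) < k := lt_of_le_of_lt (Nat.floor_le hcpos.le) hck
    have h3 : ⌊c⌋₊ < k := by exact_mod_cast h2
    omega
  have hmgt : c < (m:ℝ) := by
    have h4 := Nat.lt_floor_add_one c
    rw [hmdef]
    push_cast
    linarith
  have part1 : ∀ n : ℕ, 1 ≤ n →
      c ^ (n ^ d) < (X.langCard (cube d n) : ℝ) := by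
    intro n hn
    have hcount := EpsAux.langCard_ge hd hfull hε hεsmall hA n m hn hm_le
    have hnd : n ^ d ≠ 0 := by positivity
    calc c ^ (n ^ d) < ((m:ℝ)) ^ (n ^ d) := pow_lt_pow_left₀ hmgt hcpos.le hnd
      _ = ((m ^ (n ^ d) : ℕ) : ℝ) := by push_cast; ring
      _ ≤ _ := by exact_mod_cast hcount
  have hterm : ∀ n : ℕ+,
      Real.log (m:ℝ) ≤ Real.log (X.langCard (cube d (n:ℕ))) / ((n:ℕ):ℝ) ^ d := by
    intro n
    have hn1 : 1 ≤ (n:ℕ) := n.one_le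
    have hcount := EpsAux.langCard_ge hd hfull hε hεsmall hA (n:ℕ) m hn1 hm_le
    have hn1' : (1:ℝ) ≤ ((n:ℕ):ℝ) := by exact_mod_cast hn1
    have hnpos : (0:ℝ) < ((n:ℕ):ℝ) ^ d := by positivity
    rw [le_div_iff₀ hnpos]
    have hmpos : (0:ℝ) < (m:ℝ) := by
      have : 0 < m := Nat.succ_pos _
      exact_mod_cast this
    have hle : ((m:ℝ)) ^ ((n:ℕ) ^ d) ≤ (X.langCard (cube d (n:ℕ)) : ℝ) := by
      have he1 : ((m:ℝ)) ^ ((n:ℕ) ^ d) = ((m ^ ((n:ℕ) ^ d) : ℕ) : ℝ) := by push_cast; ring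
      rw [he1]
      exact_mod_cast hcount
    have hlog := Real.log_le_log (by positivity) hle
    rw [Real.log_pow] at hlog
    have hcast : ((((n:ℕ) ^ d : ℕ)):ℝ) = ((n:ℕ):ℝ) ^ d := by push_cast; ring
    rw [hcast] at hlog
    linarith
  have hent : Real.log (m:ℝ) ≤ X.entropy := by
    rw [NNSFT.entropy]
    exact le_ciInf hterm
  have hlogc : Real.log c < Real.log (m:ℝ) := Real.log_lt_log hcpos hmgt
  have part2 : X.entropy > Real.log (Fintype.card A) + Real.log (1 - ((d:ℝ)+1)*ε) := by
    have hsplit : Real.log (Fintype.card A) + Real.log (1 - ((d:ℝ)+1)*ε) = Real.log c := by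
      rw [hcdef, Real.log_mul (ne_of_gt hN) (ne_of_gt hc1)]
    rw [hsplit]
    linarith
  refine ⟨part1, part2, ?_⟩
  intro β hβ hεeq
  have hdd : ((d:ℝ) + 1) ≠ 0 := by positivity
  have h5 : ((d:ℝ)+1) * ((1 - Real.exp (-β)) / ((d:ℝ)+1)) = 1 - Real.exp (-β) := by
    field_simp
  have hee : 1 - ((d:ℝ) + 1) * ε = Real.exp (-β) := by
    rw [hεeq, h5]
    ring
  have h6 := part2
  rw [hee, Real.log_exp] at h6
  linarith
end

section
/- For the iceberg model I_M (the nearest neighbor Z² SFT on alphabet {-M,...,-1,1,...,M} where same-sign letters may always neighbor each other and opposite-sign letters may neighbor only if they are 1 and -1), the topological entropy satisfies h(I_M) ≥ log M + (log 2)/(5M⁵). Consequently log|A_M| - h(I_M) ≤ log 2 - (log 2)/(5M⁵) < log 2. -/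
open MeasureTheory

/-- The iceberg model: alphabet `{-M,…,-1,1,…,M}` encoded as `Fin M ⊕ Fin M`
(`Sum.inl k` is the positive letter `k+1`, `Sum.inr k` is the negative letter
`-(k+1)`).  Same-sign letters may always neighbor each other; opposite-sign
letters may neighbor only if they are `1` and `-1`. -/
def iceberg (M : ℕ) : NNSFT 2 (Fin M ⊕ Fin M) where
  adj _ a b :=
    match a, b with
    | Sum.inl _, Sum.inl _ => True
    | Sum.inr _, Sum.inr _ => True
    | Sum.inl i, Sum.inr j => (i : ℕ) = 0 ∧ (j : ℕ) = 0
    | Sum.inr i, Sum.inl j => (i : ℕ) = 0 ∧ (j : ℕ) = 0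

namespace IcebergProof

/-- The grid `[1,n]²` as a finset of `ℤ × ℤ`. -/
noncomputable def G (n : ℕ) : Finset (ℤ × ℤ) := Finset.Icc (1:ℤ) n ×ˢ Finset.Icc (1:ℤ) n

/-- The plus shape centered at `c`. -/
def nbhd (c : ℤ × ℤ) : Finset (ℤ × ℤ) :=
  {c, (c.1+1, c.2), (c.1-1, c.2), (c.1, c.2+1), (c.1, c.2-1)}

/-- Candidate centers: grid points with `x + 2y ≡ r (mod 5)`. -/
noncomputable def ctrs (n : ℕ) (r : ℤ) : Finset (ℤ × ℤ) :=
  (G n).filter (fun p => (p.1 + 2 * p.2) % 5 = r)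

/-- The (possibly clipped) plus cells of center `c`. -/
noncomputable def cells (n : ℕ) (c : ℤ × ℤ) : Finset (ℤ × ℤ) := nbhd c ∩ G n

noncomputable def rest (n : ℕ) (r : ℤ) : Finset (ℤ × ℤ) :=
  (G n) \ (ctrs n r).biUnion (cells n)

lemma mem_nbhd {p c : ℤ × ℤ} : p ∈ nbhd c ↔
    p = c ∨ p = (c.1+1, c.2) ∨ p = (c.1-1, c.2) ∨ p = (c.1, c.2+1) ∨ p = (c.1, c.2-1) := by
  simp [nbhd]

lemma ctrs_mod {n : ℕ} {r : ℤ} {c : ℤ × ℤ} (hc : c ∈ ctrs n r) :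
    (c.1 + 2 * c.2) % 5 = r := (Finset.mem_filter.mp hc).2

lemma ctrs_subset {n : ℕ} {r : ℤ} : ctrs n r ⊆ G n := Finset.filter_subset _ _

lemma cells_subset {n : ℕ} {c : ℤ × ℤ} : cells n c ⊆ G n := Finset.inter_subset_right

lemma center_mem_cells {n : ℕ} {r : ℤ} {c : ℤ × ℤ} (hc : c ∈ ctrs n r) : c ∈ cells n c := by
  refine Finset.mem_inter.mpr ⟨?_, ctrs_subset hc⟩
  exact mem_nbhd.mpr (Or.inl rfl)

lemma owner_unique {n : ℕ} {r : ℤ} {p c c' : ℤ × ℤ} (hc : c ∈ ctrs n r) (hc' : c' ∈ ctrs n r)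
    (hp : p ∈ cells n c) (hp' : p ∈ cells n c') : c = c' := by
  have h1 := ctrs_mod hc
  have h2 := ctrs_mod hc'
  have hn1 := mem_nbhd.mp (Finset.mem_inter.mp hp).1
  have hn2 := mem_nbhd.mp (Finset.mem_inter.mp hp').1
  obtain ⟨px, py⟩ := p
  obtain ⟨cx, cy⟩ := c
  obtain ⟨cx', cy'⟩ := c'
  simp only [Prod.mk.injEq, Prod.ext_iff] at hn1 hn2 ⊢
  omega

lemma ctrs_not_adjacent {n : ℕ} {r : ℤ} {c c' : ℤ × ℤ} (hc : c ∈ ctrs n r)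
    (hc' : c' ∈ ctrs n r) (hadj : c' ∈ nbhd c) (hne : c' ≠ c) : False := by
  have h1 := ctrs_mod hc
  have h2 := ctrs_mod hc'
  have hn1 := mem_nbhd.mp hadj
  obtain ⟨cx, cy⟩ := c
  obtain ⟨cx', cy'⟩ := c'
  simp only [Prod.mk.injEq, Prod.ext_iff, ne_eq] at hn1 hne
  omega

/-- The data parameterizing our family of configurations. -/
abbrev Data (M n : ℕ) (r : ℤ) : Type :=
  (∀ c : {x // x ∈ ctrs n r}, Option ({y // y ∈ cells n c.1} → Fin M)) ×
    ({y // y ∈ rest n r} → Fin M)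

variable {M n : ℕ} {r : ℤ}

noncomputable def X (hM : 0 < M) (d : Data M n r) (p : ℤ × ℤ) : Fin M ⊕ Fin M :=
  if h : ∃ c, c ∈ ctrs n r ∧ p ∈ cells n c then
    (d.1 ⟨h.choose, h.choose_spec.1⟩).elim
      (if p = h.choose then Sum.inr ⟨0, hM⟩ else Sum.inl ⟨0, hM⟩)
      (fun f => Sum.inl (f ⟨p, h.choose_spec.2⟩))
  else if h' : p ∈ rest n r then Sum.inl (d.2 ⟨p, h'⟩) else Sum.inl ⟨0, hM⟩

lemma X_owned (hM : 0 < M) (d : Data M n r) {p c : ℤ × ℤ} (hc : c ∈ ctrs n r)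
    (hp : p ∈ cells n c) :
    X hM d p = (d.1 ⟨c, hc⟩).elim
      (if p = c then Sum.inr ⟨0, hM⟩ else Sum.inl ⟨0, hM⟩)
      (fun f => Sum.inl (f ⟨p, hp⟩)) := by
  have h : ∃ c, c ∈ ctrs n r ∧ p ∈ cells n c := ⟨c, hc, hp⟩
  rw [X, dif_pos h]
  have hcc : h.choose = c := owner_unique h.choose_spec.1 hc h.choose_spec.2 hp
  revert hp hc
  rw [← hcc]
  intro hc hp
  rfl

lemma X_rest (hM : 0 < M) (d : Data M n r) {p : ℤ × ℤ} (hp : p ∈ rest n r) :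
    X hM d p = Sum.inl (d.2 ⟨p, hp⟩) := by
  have h : ¬ ∃ c, c ∈ ctrs n r ∧ p ∈ cells n c := by
    rintro ⟨c, hc, hpc⟩
    have : p ∈ (ctrs n r).biUnion (cells n) := Finset.mem_biUnion.mpr ⟨c, hc, hpc⟩
    exact (Finset.mem_sdiff.mp hp).2 this
  rw [X, dif_neg h, dif_pos hp]

lemma X_out (hM : 0 < M) (d : Data M n r) {p : ℤ × ℤ} (hp : p ∉ G n) :
    X hM d p = Sum.inl ⟨0, hM⟩ := by
  have h : ¬ ∃ c, c ∈ ctrs n r ∧ p ∈ cells n c := by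
    rintro ⟨c, _, hpc⟩; exact hp (cells_subset hpc)
  have h' : p ∉ rest n r := fun hr => hp (Finset.mem_sdiff.mp hr).1
  rw [X, dif_neg h, dif_neg h']

/-- If `X` takes a negative value at `p`, then `p` is a center with flag `none`. -/
lemma X_inr (hM : 0 < M) (d : Data M n r) {p : ℤ × ℤ} {k : Fin M}
    (h : X hM d p = Sum.inr k) :
    ∃ hp : p ∈ ctrs n r, d.1 ⟨p, hp⟩ = none ∧ k = ⟨0, hM⟩ := by
  by_cases hex : ∃ c, c ∈ ctrs n r ∧ p ∈ cells n c
  · obtain ⟨c, hc, hpc⟩ := hex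
    rw [X_owned hM d hc hpc] at h
    cases ho : d.1 ⟨c, hc⟩ with
    | none =>
      rw [ho] at h
      by_cases hpec : p = c
      · subst hpec
        simp only [if_pos rfl, Option.elim] at h
        refine ⟨hc, ho, ?_⟩
        simpa using h.symm
      · simp [hpec] at h
    | some f => rw [ho] at h; simp at h
  · rw [X] at h
    rw [dif_neg hex] at h
    by_cases h' : p ∈ rest n r
    · rw [dif_pos h'] at h; simp at h
    · rw [dif_neg h'] at h; simp at h

lemma X_arm (hM : 0 < M) (d : Data M n r) {p q : ℤ × ℤ} (hp : p ∈ ctrs n r)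
    (ho : d.1 ⟨p, hp⟩ = none) (hq : q ∈ cells n p) (hne : q ≠ p) :
    X hM d q = Sum.inl ⟨0, hM⟩ := by
  rw [X_owned hM d hp hq, ho]
  simp [hne]

lemma X_center (hM : 0 < M) (d : Data M n r) {p : ℤ × ℤ} (hp : p ∈ ctrs n r)
    (ho : d.1 ⟨p, hp⟩ = none) : X hM d p = Sum.inr ⟨0, hM⟩ := by
  rw [X_owned hM d hp (center_mem_cells hp), ho]
  simp

lemma iceberg_adj_ll {M : ℕ} (i : Fin 2) (a b : Fin M) :
    (iceberg M).adj i (Sum.inl a) (Sum.inl b) := trivial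

lemma iceberg_adj_rr {M : ℕ} (i : Fin 2) (a b : Fin M) :
    (iceberg M).adj i (Sum.inr a) (Sum.inr b) := trivial

lemma iceberg_adj_lr {M : ℕ} (i : Fin 2) (a b : Fin M) (ha : (a : ℕ) = 0) (hb : (b : ℕ) = 0) :
    (iceberg M).adj i (Sum.inl a) (Sum.inr b) := ⟨ha, hb⟩

lemma iceberg_adj_rl {M : ℕ} (i : Fin 2) (a b : Fin M) (ha : (a : ℕ) = 0) (hb : (b : ℕ) = 0) :
    (iceberg M).adj i (Sum.inr a) (Sum.inl b) := ⟨ha, hb⟩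

lemma X_adj (hM : 0 < M) (d : Data M n r) {p q : ℤ × ℤ} (hq : q ∈ nbhd p)
    (hp : p ∈ nbhd q) (hne : q ≠ p) (i : Fin 2) :
    (iceberg M).adj i (X hM d p) (X hM d q) := by
  cases hxp : X hM d p with
  | inl a =>
    cases hxq : X hM d q with
    | inl b => exact iceberg_adj_ll i a b
    | inr b =>
      obtain ⟨hqc, hoq, hb⟩ := X_inr hM d hxq
      have ha : a = ⟨0, hM⟩ := by
        by_cases hpG : p ∈ G n
        · have hpc : p ∈ cells n q := Finset.mem_inter.mpr ⟨hp, hpG⟩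
          have := X_arm hM d hqc hoq hpc (Ne.symm hne)
          rw [hxp] at this; exact Sum.inl.inj this
        · have := X_out hM d hpG
          rw [hxp] at this; exact Sum.inl.inj this
      exact iceberg_adj_lr i a b (by simp [ha]) (by simp [hb])
  | inr a =>
    obtain ⟨hpc, hop, ha⟩ := X_inr hM d hxp
    cases hxq : X hM d q with
    | inl b =>
      have hb : b = ⟨0, hM⟩ := by
        by_cases hqG : q ∈ G n
        · have hqcell : q ∈ cells n p := Finset.mem_inter.mpr ⟨hq, hqG⟩
          have := X_arm hM d hpc hop hqcell hne
          rw [hxq] at this; exact Sum.inl.inj this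
        · have := X_out hM d hqG
          rw [hxq] at this; exact Sum.inl.inj this
      exact iceberg_adj_rl i a b (by simp [ha]) (by simp [hb])
    | inr b =>
      obtain ⟨hqc, hoq, hb⟩ := X_inr hM d hxq
      exact absurd (ctrs_not_adjacent hpc hqc hq hne) not_false

/-- Project a site to a pair. -/
def pr (v : Site 2) : ℤ × ℤ := (v 0, v 1)

def toSite (p : ℤ × ℤ) : Site 2 := fun j => if j = 0 then p.1 else p.2

lemma pr_toSite (p : ℤ × ℤ) : pr (toSite p) = p := by
  unfold pr toSite
  exact Prod.ext (by norm_num) (by norm_num)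

lemma mem_cube_iff (v : Site 2) : v ∈ cube 2 n ↔ pr v ∈ G n := by
  unfold cube G pr
  rw [Set.mem_setOf_eq, Finset.mem_product, Fin.forall_fin_two]
  simp [Finset.mem_Icc, and_assoc]

lemma pr_add_unit (v : Site 2) (i : Fin 2) :
    (pr (v + unitVec 2 i) = ((pr v).1 + 1, (pr v).2)) ∨
    (pr (v + unitVec 2 i) = ((pr v).1, (pr v).2 + 1)) := by
  fin_cases i
  · left
    simp only [pr, unitVec, Pi.add_apply, Prod.mk.injEq]
    constructor <;> norm_num
  · right
    simp only [pr, unitVec, Pi.add_apply, Prod.mk.injEq]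
    constructor <;> norm_num

lemma nbhd_step {p q : ℤ × ℤ} (h : q = (p.1 + 1, p.2) ∨ q = (p.1, p.2 + 1)) :
    q ∈ nbhd p ∧ p ∈ nbhd q ∧ q ≠ p := by
  obtain ⟨px, py⟩ := p; obtain ⟨qx, qy⟩ := q
  simp only [Prod.mk.injEq] at h
  refine ⟨mem_nbhd.mpr ?_, mem_nbhd.mpr ?_, ?_⟩ <;>
    simp only [Prod.mk.injEq, ne_eq] <;> omega

lemma X_pts (hM : 0 < M) (d : Data M n r) :
    (fun v => X hM d (pr v)) ∈ (iceberg M).pts := by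
  intro i v
  obtain ⟨h1, h2, h3⟩ := nbhd_step (pr_add_unit v i)
  exact X_adj hM d h1 h2 h3 i

lemma X_inj (hM : 0 < M) :
    Function.Injective (fun d : Data M n r =>
      (cube 2 n).restrict (fun v => X hM d (pr v))) := by
  intro d d' hdd
  have hG : ∀ p ∈ G n, X hM d p = X hM d' p := by
    intro p hp
    have hv : toSite p ∈ cube 2 n := (mem_cube_iff _).mpr (by rwa [pr_toSite])
    have := congrFun hdd ⟨toSite p, hv⟩
    simpa [Set.restrict, pr_toSite] using this
  refine Prod.ext ?_ ?_
  · funext c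
    have hXc := hG c (ctrs_subset c.2)
    cases ho : d.1 c with
    | none =>
      cases ho' : d'.1 c with
      | none => rfl
      | some f =>
        have h1 : X hM d c.1 = Sum.inr ⟨0, hM⟩ := X_center hM d c.2 (by rw [← ho])
        have h2 : X hM d' c.1 = Sum.inl (f ⟨c.1, center_mem_cells c.2⟩) := by
          rw [X_owned hM d' c.2 (center_mem_cells c.2), ho']; rfl
        rw [h1, h2] at hXc; exact absurd hXc (by simp)
    | some f =>
      cases ho' : d'.1 c with
      | none =>
        have h1 : X hM d' c.1 = Sum.inr ⟨0, hM⟩ := X_center hM d' c.2 (by rw [← ho'])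
        have h2 : X hM d c.1 = Sum.inl (f ⟨c.1, center_mem_cells c.2⟩) := by
          rw [X_owned hM d c.2 (center_mem_cells c.2), ho]; rfl
        rw [h1, h2] at hXc; exact absurd hXc (by simp)
      | some f' =>
        congr 1
        funext q
        have hq := hG q.1 (cells_subset q.2)
        have h1 : X hM d q.1 = Sum.inl (f q) := by
          rw [X_owned hM d c.2 q.2, ho]; rfl
        have h2 : X hM d' q.1 = Sum.inl (f' q) := by
          rw [X_owned hM d' c.2 q.2, ho']; rfl
        rw [h1, h2] at hq
        exact Sum.inl.inj hq
  · funext q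
    have hq := hG q.1 (Finset.mem_sdiff.mp q.2).1
    rw [X_rest hM d q.2, X_rest hM d' q.2] at hq
    exact Sum.inl.inj hq

set_option maxHeartbeats 1000000 in
lemma card_data :
    Fintype.card (Data M n r) =
      (∏ c ∈ ctrs n r, (M ^ (cells n c).card + 1)) * M ^ (rest n r).card := by
  rw [Fintype.card_prod]
  congr 1
  · rw [Fintype.card_pi]
    rw [← Finset.prod_coe_sort (ctrs n r) (fun c => M ^ (cells n c).card + 1)]
    congr 1
    funext c
    rw [Fintype.card_option, Fintype.card_fun, Fintype.card_coe, Fintype.card_fin]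
  · rw [Fintype.card_fun, Fintype.card_coe, Fintype.card_fin]

lemma cube_finite : (cube 2 n).Finite := by
  have : cube 2 n = Set.univ.pi (fun _ : Fin 2 => Set.Icc (1:ℤ) n) := by
    ext v
    simp [cube, Set.mem_pi, Set.mem_Icc, Pi.le_def, forall_and]
  rw [this]
  exact Set.Finite.pi (fun _ => Set.finite_Icc _ _)

set_option maxHeartbeats 1000000 in
lemma card_data_le_langCard (hM : 0 < M) :
    Fintype.card (Data M n r) ≤ (iceberg M).langCard (cube 2 n) := by
  haveI : Finite ↥(cube 2 n) := cube_finite.to_subtype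
  haveI : Finite (↥(cube 2 n) → Fin M ⊕ Fin M) := inferInstance
  set L := (iceberg M).langSet (cube 2 n) with hL
  haveI : Finite ↥L := Subtype.finite
  let F : Data M n r → ↥L := fun d =>
    ⟨(cube 2 n).restrict (fun v => X hM d (pr v)),
      ⟨(fun v => X hM d (pr v)), X_pts hM d, rfl⟩⟩
  have hFinj : Function.Injective F := by
    intro d d' h
    exact X_inj hM (Subtype.ext_iff.mp h)
  have := Nat.card_le_card_of_injective F hFinj
  rwa [Nat.card_eq_fintype_card, Nat.card_coe_set_eq] at this

lemma G_card : (G n).card = n ^ 2 := by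
  rw [G, Finset.card_product, Int.card_Icc]
  simp [sq]

lemma exists_good_r : ∃ r : ℤ, n ^ 2 ≤ 5 * (ctrs n r).card := by
  rcases Nat.eq_zero_or_pos n with hn | hn
  · exact ⟨0, by simp [hn]⟩
  by_contra hcon
  push_neg at hcon
  have hfib : (G n).card = ∑ b ∈ Finset.Icc (0:ℤ) 4, (ctrs n b).card := by
    unfold ctrs
    apply Finset.card_eq_sum_card_fiberwise
    intro p _
    simp only [Finset.mem_coe, Finset.mem_Icc]
    constructor
    · exact Int.emod_nonneg _ (by norm_num)
    · have := Int.emod_lt_of_pos (p.1 + 2 * p.2) (show (0:ℤ) < 5 by norm_num)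
      omega
  have hcard4 : (Finset.Icc (0:ℤ) 4).card = 5 := by rw [Int.card_Icc]; rfl
  have htot : ∑ b ∈ Finset.Icc (0:ℤ) 4, (ctrs n b).card = n ^ 2 := by
    rw [← hfib, G_card]
  have hsum : ∑ b ∈ Finset.Icc (0:ℤ) 4, 5 * (ctrs n b).card ≤
      ∑ _b ∈ Finset.Icc (0:ℤ) 4, (n ^ 2 - 1) := by
    apply Finset.sum_le_sum
    intro b _
    have := hcon b
    omega
  rw [← Finset.mul_sum, htot, Finset.sum_const, hcard4] at hsum
  have hn2 : 1 ≤ n ^ 2 := Nat.one_le_iff_ne_zero.mpr (by positivity)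
  simp only [smul_eq_mul] at hsum
  omega

lemma cells_disjoint {c c' : ℤ × ℤ} (hc : c ∈ ctrs n r) (hc' : c' ∈ ctrs n r)
    (hne : c ≠ c') : Disjoint (cells n c) (cells n c') := by
  rw [Finset.disjoint_left]
  intro p hp hp'
  exact hne (owner_unique hc hc' hp hp')

lemma sum_cells_add_rest :
    ∑ c ∈ ctrs n r, (cells n c).card + (rest n r).card = n ^ 2 := by
  have hdisj := Finset.card_biUnion (s := ctrs n r) (t := cells n)
    (fun c hc c' hc' hne => cells_disjoint hc hc' hne)
  have hsub : (ctrs n r).biUnion (cells n) ⊆ G n :=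
    Finset.biUnion_subset.mpr (fun c _ => cells_subset)
  have hrest : (rest n r).card = (G n).card - ((ctrs n r).biUnion (cells n)).card :=
    Finset.card_sdiff_of_subset hsub
  have hle := Finset.card_le_card hsub
  rw [← hdisj, hrest]
  rw [G_card] at *
  omega

lemma nbhd_card_le (c : ℤ × ℤ) : (nbhd c).card ≤ 5 := by
  unfold nbhd
  apply le_trans (Finset.card_insert_le _ _)
  apply Nat.succ_le_succ
  apply le_trans (Finset.card_insert_le _ _)
  apply Nat.succ_le_succ
  apply le_trans (Finset.card_insert_le _ _)
  apply Nat.succ_le_succ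
  apply le_trans (Finset.card_insert_le _ _)
  apply Nat.succ_le_succ
  simp

lemma cells_card_le (c : ℤ × ℤ) : (cells n c).card ≤ 5 :=
  le_trans (Finset.card_le_card Finset.inter_subset_left) (nbhd_card_le c)

lemma data_nonempty (hM : 0 < M) : Nonempty (Data M n r) :=
  ⟨(fun _ => none, fun _ => ⟨0, hM⟩)⟩

set_option maxHeartbeats 1600000 in
lemma count_facts (hM : 0 < M) : ∃ N : ℕ, 0 < N ∧
    N ≤ (iceberg M).langCard (cube 2 n) ∧
    (N:ℝ) = (∏ c ∈ ctrs n r, ((M:ℝ) ^ (cells n c).card + 1)) *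
      (M:ℝ) ^ (rest n r).card := by
  haveI := data_nonempty (M := M) (n := n) (r := r) hM
  refine ⟨Fintype.card (Data M n r), Fintype.card_pos, card_data_le_langCard hM, ?_⟩
  rw [card_data]
  push_cast
  ring

lemma main_bound (M n : ℕ) (hM : 0 < M) (hn : 0 < n) :
    Real.log M + Real.log 2 / (5 * (M:ℝ)^5) ≤
      Real.log ((iceberg M).langCard (cube 2 n)) / (n:ℝ)^2 := by
  obtain ⟨r, hr⟩ := exists_good_r (n := n)
  set t := (M:ℝ) with hts
  have ht1 : 1 ≤ t := by rw [hts]; exact_mod_cast hM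
  have ht0 : 0 < t := lt_of_lt_of_le one_pos ht1
  have ht5 : 0 < t ^ 5 := by positivity
  set u := (t ^ 5)⁻¹ with hus
  have hu0 : 0 < u := by positivity
  obtain ⟨N, hNpos, hNL, hNreal⟩ := count_facts (n := n) (r := r) hM
  rw [← hts] at hNreal
  have hfacpos : ∀ c ∈ ctrs n r, (0:ℝ) < t ^ (cells n c).card + 1 := by
    intro c _; positivity
  have hlogN : Real.log N =
      (∑ c ∈ ctrs n r, Real.log (t ^ (cells n c).card + 1)) +
        ((rest n r).card : ℝ) * Real.log t := by
    rw [hNreal, Real.log_mul, Real.log_prod, Real.log_pow]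
    · intro c hc; exact ne_of_gt (hfacpos c hc)
    · exact Finset.prod_ne_zero_iff.mpr (fun c hc => ne_of_gt (hfacpos c hc))
    · positivity
  have key : ∀ c ∈ ctrs n r,
      ((cells n c).card : ℝ) * Real.log t + Real.log (1 + u) ≤
        Real.log (t ^ (cells n c).card + 1) := by
    intro c _
    have hs5 : (cells n c).card ≤ 5 := cells_card_le c
    have hpow : t ^ (cells n c).card ≤ t ^ 5 := pow_le_pow_right₀ ht1 hs5
    have hmul : t ^ (cells n c).card * u ≤ 1 := by
      rw [show (1:ℝ) = t ^ 5 * u from (mul_inv_cancel₀ (ne_of_gt ht5)).symm]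
      exact mul_le_mul_of_nonneg_right hpow hu0.le
    have h1 : t ^ (cells n c).card * (1 + u) ≤ t ^ (cells n c).card + 1 := by
      nlinarith
    have h2 : Real.log (t ^ (cells n c).card * (1 + u)) ≤
        Real.log (t ^ (cells n c).card + 1) :=
      Real.log_le_log (by positivity) h1
    rwa [Real.log_mul (by positivity) (by positivity), Real.log_pow] at h2
  have hsum := Finset.sum_le_sum key
  have hLHS : ∑ c ∈ ctrs n r, (((cells n c).card : ℝ) * Real.log t + Real.log (1 + u))
      = ((∑ c ∈ ctrs n r, (cells n c).card : ℕ) : ℝ) * Real.log t +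
        ((ctrs n r).card : ℝ) * Real.log (1 + u) := by
    rw [Finset.sum_add_distrib, ← Finset.sum_mul, Finset.sum_const, nsmul_eq_mul]
    push_cast
    ring
  rw [hLHS] at hsum
  have hSR : ((∑ c ∈ ctrs n r, (cells n c).card : ℕ) : ℝ) + ((rest n r).card : ℝ)
      = (n:ℝ) ^ 2 := by
    have := sum_cells_add_rest (n := n) (r := r)
    exact_mod_cast congrArg (Nat.cast : ℕ → ℝ) this
  have hlogN2 : (n:ℝ)^2 * Real.log t + ((ctrs n r).card : ℝ) * Real.log (1 + u)
      ≤ Real.log N := by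
    rw [hlogN]
    have hlt0 : 0 ≤ Real.log t := Real.log_nonneg ht1
    nlinarith [hsum, hSR]
  -- bound log(1+u) from below
  have hlog2 : Real.log 2 ≤ t ^ 5 * Real.log (1 + u) := by
    have hb := one_add_mul_le_pow (a := u) (by linarith) (M ^ 5)
    have hcast : ((M ^ 5 : ℕ) : ℝ) = t ^ 5 := by push_cast; rfl
    rw [hcast, mul_inv_cancel₀ (ne_of_gt ht5)] at hb
    calc Real.log 2 ≤ Real.log ((1 + u) ^ (M ^ 5)) :=
          Real.log_le_log (by norm_num) (by norm_num at hb ⊢; linarith)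
      _ = ((M ^ 5 : ℕ) : ℝ) * Real.log (1 + u) := Real.log_pow _ _
      _ = t ^ 5 * Real.log (1 + u) := by rw [hcast]
  have hlogu0 : 0 ≤ Real.log (1 + u) := Real.log_nonneg (by linarith)
  have hK : (n:ℝ) ^ 2 ≤ 5 * ((ctrs n r).card : ℝ) := by exact_mod_cast hr
  have hKlog : (n:ℝ)^2 * (Real.log 2 / (5 * t ^ 5)) ≤
      ((ctrs n r).card : ℝ) * Real.log (1 + u) := by
    have h1 : (n:ℝ)^2 * Real.log 2 ≤
        (5 * ((ctrs n r).card : ℝ)) * (t ^ 5 * Real.log (1 + u)) :=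
      mul_le_mul hK hlog2 (Real.log_nonneg one_le_two) (by positivity)
    rw [← mul_div_assoc, div_le_iff₀ (by positivity)]
    nlinarith [h1]
  have hlogL : Real.log N ≤ Real.log ((iceberg M).langCard (cube 2 n)) :=
    Real.log_le_log (by exact_mod_cast hNpos) (by exact_mod_cast hNL)
  rw [le_div_iff₀ (by positivity : (0:ℝ) < (n:ℝ)^2)]
  calc (Real.log t + Real.log 2 / (5 * t ^ 5)) * (n:ℝ)^2
      = (n:ℝ)^2 * Real.log t + (n:ℝ)^2 * (Real.log 2 / (5 * t ^ 5)) := by ring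
    _ ≤ (n:ℝ)^2 * Real.log t + ((ctrs n r).card : ℝ) * Real.log (1 + u) := by
        linarith
    _ ≤ Real.log N := hlogN2
    _ ≤ _ := hlogL

end IcebergProof

theorem iceberg_entropy (M : ℕ) (hM : 1 ≤ M) :
    (iceberg M).entropy ≥ Real.log M + Real.log 2 / (5 * (M : ℝ) ^ 5) ∧
    Real.log (Fintype.card (Fin M ⊕ Fin M)) - (iceberg M).entropy ≤
      Real.log 2 - Real.log 2 / (5 * (M : ℝ) ^ 5) ∧
    Real.log 2 - Real.log 2 / (5 * (M : ℝ) ^ 5) < Real.log 2 := by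
  have hMpos : 0 < M := hM
  have hent : Real.log M + Real.log 2 / (5 * (M : ℝ) ^ 5) ≤ (iceberg M).entropy := by
    unfold NNSFT.entropy
    apply le_ciInf
    intro m
    exact IcebergProof.main_bound M m hMpos m.pos
  refine ⟨hent, ?_, ?_⟩
  · have hcard : ((Fintype.card (Fin M ⊕ Fin M) : ℕ) : ℝ) = 2 * (M : ℝ) := by
      rw [Fintype.card_sum, Fintype.card_fin]
      push_cast
      ring
    have hlog : Real.log (Fintype.card (Fin M ⊕ Fin M)) = Real.log 2 + Real.log M := by
      rw [hcard, Real.log_mul two_ne_zero (by exact_mod_cast hMpos.ne')]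
    rw [hlog]
    linarith
  · have : 0 < Real.log 2 / (5 * (M : ℝ) ^ 5) :=
      div_pos (Real.log_pos one_lt_two) (by positivity)
    linarith
end
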